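/- arXiv:2107.00084 — 5 statements merged into one kernel-verified Lean document; each statement's English description precedes it below -/
import Mathlib

section
/- If Γ is a W-digraph with finite vertex set and F is a subfield of ℂ, then the number of connected components of Γ equals ⟨M(Γ)^F, ind⟩ = dim_{F(u)} {v ∈ M(Γ)^F : h v = ind(h) v for all h ∈ H^F}. -/
open scoped Classical

noncomputable section

/-- The combinatorial data of a `W`-digraph over the index set `B` of the simple reflections:
for each label `i : B`, every vertex `v` lies on exactly one edge with label `i`, joining `v`
to `mate i v ≠ v`; `head i v` records whether `v` is the head (i.e. the edge is directed into
`v`), and `dash i v` whether that edge is dashed (as opposed to solid). -/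
structure WDigraphData (B V : Type*) where
  mate : B → V → V
  head : B → V → Bool
  dash : B → V → Bool
  mate_mate : ∀ i v, mate i (mate i v) = v
  mate_ne : ∀ i v, mate i v ≠ v
  head_mate : ∀ i v, head i (mate i v) = !(head i v)
  dash_mate : ∀ i v, dash i (mate i v) = dash i v

namespace WDigraphData

variable {B V : Type*} (Γ : WDigraphData B V)

/-- `Γ` has a solid edge `a → b` with label `i`. -/
def Solid (i : B) (a b : V) : Prop :=
  Γ.head i a = false ∧ Γ.dash i a = false ∧ Γ.mate i a = b

/-- `Γ` has a dashed edge `a ⇢ b` with label `i`. -/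
def Dashed (i : B) (a b : V) : Prop :=
  Γ.head i a = false ∧ Γ.dash i a = true ∧ Γ.mate i a = b

/-- There is a directed edge (solid or dashed) from `a` to `b` in `Γ`. -/
def DirEdge (a b : V) : Prop :=
  ∃ i, Γ.head i a = false ∧ Γ.mate i a = b

/-- `Γ.In v` is the set of labels of edges of `Γ` directed into `v`. -/
def In (v : V) : Set B := {i | Γ.head i v = true}

/-- `N_Γ(J)`: the number of vertices `v` with `In(v) = J`. -/
def N (J : Set B) : ℕ := Nat.card {v : V // Γ.In v = J}

/-- The underlying undirected graph of `Γ`. -/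
def underlying : SimpleGraph V where
  Adj a b := ∃ i, Γ.mate i a = b
  symm := by
    constructor
    rintro a b ⟨i, rfl⟩
    exact ⟨i, Γ.mate_mate i a⟩
  loopless := by
    constructor
    rintro a ⟨i, h⟩
    exact Γ.mate_ne i a h

/-- `Γ` contains a closed directed path of positive length. -/
def HasDirCycle : Prop :=
  ∃ (n : ℕ) (f : ℕ → V), 0 < n ∧ f n = f 0 ∧ ∀ k < n, Γ.DirEdge (f k) (f (k + 1))

/-- `Γ` is acyclic: it contains no closed directed path of positive length. -/
def Acyclic : Prop := ¬ Γ.HasDirCycle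

/-- The connected component `c` of `Γ` is acyclic: `Γ` has no closed directed path of
positive length lying in `c`. -/
def AcyclicComponent (c : Γ.underlying.ConnectedComponent) : Prop :=
  ¬ ∃ (n : ℕ) (f : ℕ → V), 0 < n ∧ f n = f 0 ∧
      (∀ k < n, Γ.DirEdge (f k) (f (k + 1))) ∧ Γ.underlying.connectedComponentMk (f 0) = c

/-- `Γ_J`: remove from `Γ` all edges whose labels lie outside `J`. -/
def restrict (J : Set B) : WDigraphData J V where
  mate i v := Γ.mate i v
  head i v := Γ.head i v
  dash i v := Γ.dash i v
  mate_mate i v := Γ.mate_mate i v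
  mate_ne i v := Γ.mate_ne i v
  head_mate i v := Γ.head_mate i v
  dash_mate i v := Γ.dash_mate i v

variable (K : Type*) [Field K] (q : K)

/-- The image of a basis vector `v` under the operator `τ_i` giving the action of `T_{s_i}`
on `M(Γ)`: for a solid edge `α → β` with label `i`, `T_{s_i} α = β` and
`T_{s_i} β = q²α + (q²−1)β`; for a dashed edge `α ⇢ β` with label `i`,
`T_{s_i} α = qα + (q+1)β` and `T_{s_i} β = (q²−q)α + (q²−q−1)β`. -/
def tauFun (i : B) (v : V) : V →₀ K :=
  if Γ.head i v then
    if Γ.dash i v then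
      (q ^ 2 - q) • Finsupp.single (Γ.mate i v) 1 + (q ^ 2 - q - 1) • Finsupp.single v 1
    else
      q ^ 2 • Finsupp.single (Γ.mate i v) 1 + (q ^ 2 - 1) • Finsupp.single v 1
  else
    if Γ.dash i v then
      q • Finsupp.single v 1 + (q + 1) • Finsupp.single (Γ.mate i v) 1
    else
      Finsupp.single (Γ.mate i v) 1

/-- The operator `τ_i` on the free module `M(Γ)` with basis the vertices of `Γ`. -/
def tau (i : B) : (V →₀ K) →ₗ[K] (V →₀ K) :=
  Finsupp.lsum K fun v => LinearMap.toSpanSingleton K (V →₀ K) (Γ.tauFun K q i v)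

end WDigraphData

/-- The data of a `W`-graph in the sense of Gyoja: vertex set `X`, vertex labels
`I x ⊆ B`, and edge weights `mu : X × X → F`. -/
structure WGraphData (B X F : Type*) where
  I : X → Set B
  mu : X → X → F

namespace WGraphData

variable {B X F : Type*} (Ψ : WGraphData B X F)
variable (K : Type*) [Field F] [Field K] [Algebra F K] [Fintype X] (q : K)

/-- The image of the basis vector `x` under the operator by which `T_{s_i}` acts on `M(Ψ)`:
`T_{s_i} x = −x` if `i ∈ I x`, and `T_{s_i} x = q²x + q Σ_{y, i ∈ I y} μ(y,x) y` otherwise. -/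
def tauFun (i : B) (x : X) : X →₀ K :=
  if i ∈ Ψ.I x then -Finsupp.single x 1
  else q ^ 2 • Finsupp.single x 1 +
    q • ∑ y : X, if i ∈ Ψ.I y then algebraMap F K (Ψ.mu y x) • Finsupp.single y (1 : K) else 0

/-- The operator by which `T_{s_i}` acts on the free module `M(Ψ)` with basis `X`. -/
def tau (i : B) : (X →₀ K) →ₗ[K] (X →₀ K) :=
  Finsupp.lsum K fun x => LinearMap.toSpanSingleton K (X →₀ K) (Ψ.tauFun K q i x)

/-- `N_Ψ(J)`: the number of vertices `x` with `I x = J`. -/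
def N (J : Set B) : ℕ := Nat.card {x : X // Ψ.I x = J}

end WGraphData

/-- For a module structure on `M` given by an algebra morphism `ρ : H → End M` and a linear
character `lam` of `H`, the eigenspace `M_lam = {v ∈ M | h v = lam(h) v for all h ∈ H}`. -/
def charSpace {K M H : Type*} [Field K] [AddCommGroup M] [Module K M] [Ring H] [Algebra K H]
    (ρ : H →ₐ[K] Module.End K M) (lam : H →ₐ[K] K) : Submodule K M where
  carrier := {v | ∀ h, ρ h v = lam h • v}
  add_mem' := by
    intro a b ha hb h
    rw [map_add, ha h, hb h, ← smul_add]
  zero_mem' := by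
    intro h
    rw [map_zero, smul_zero]
  smul_mem' := by
    intro c a ha h
    rw [map_smul, ha h, smul_comm]

end

section Aux

open Finsupp

lemma charSpace_mem_iff {K M H : Type*} [Field K] [AddCommGroup M] [Module K M] [Ring H]
    [Algebra K H] (ρ : H →ₐ[K] Module.End K M) (lam : H →ₐ[K] K) (v : M) :
    v ∈ charSpace ρ lam ↔ ∀ h, ρ h v = lam h • v := Iff.rfl

lemma wd_tau_apply_coeff {B V : Type*} [Finite V] (Γ : WDigraphData B V) {K : Type*} [Field K]
    (q : K) (i : B) (v : V →₀ K) (y : V) :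
    Γ.tau K q i v y = q ^ 2 * v y +
      (if Γ.dash i y then (if Γ.head i y then q + 1 else q ^ 2 - q)
       else (if Γ.head i y then (1 : K) else q ^ 2)) * (v (Γ.mate i y) - v y) := by
  classical
  haveI := Fintype.ofFinite V
  have hzero : ∀ x : V, x ≠ y → Γ.mate i x ≠ y → (Γ.tauFun K q i x) y = 0 := by
    intro x hx hmx
    unfold WDigraphData.tauFun
    split_ifs <;> simp [Finsupp.single_apply, hx, hmx]
  have hsum : Γ.tau K q i v y = ∑ x : V, v x * (Γ.tauFun K q i x) y := by
    rw [WDigraphData.tau, Finsupp.lsum_apply, Finsupp.sum_apply, Finsupp.sum_fintype]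
    · simp [LinearMap.toSpanSingleton_apply]
    · intro x; simp
  rw [hsum]
  have hne : y ≠ Γ.mate i y := (Γ.mate_ne i y).symm
  rw [← Finset.sum_subset (Finset.subset_univ ({y, Γ.mate i y} : Finset V))]
  · rw [Finset.sum_pair hne]
    have hmm := Γ.mate_mate i y
    cases hH : Γ.head i y <;> cases hD : Γ.dash i y <;>
      simp [WDigraphData.tauFun, hH, hD, Γ.head_mate, Γ.dash_mate, hmm,
        Finsupp.single_apply, hne, hne.symm] <;> ring
  · intro x _ hx
    simp only [Finset.mem_insert, Finset.mem_singleton, not_or] at hx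
    refine mul_eq_zero_of_right _ (hzero x hx.1 ?_)
    intro hcontra
    apply hx.2
    rw [← hcontra, Γ.mate_mate]

lemma wd_tau_eigen_iff {B V : Type*} [Finite V] (Γ : WDigraphData B V) {K : Type*} [Field K]
    {q : K} (hq0 : q ≠ 0) (hq1 : q ≠ 1) (hqn : q + 1 ≠ 0) (i : B) (v : V →₀ K) :
    Γ.tau K q i v = q ^ 2 • v ↔ ∀ y, v (Γ.mate i y) = v y := by
  have hc : ∀ y : V, (if Γ.dash i y then (if Γ.head i y then q + 1 else q ^ 2 - q)
       else (if Γ.head i y then (1 : K) else q ^ 2)) ≠ 0 := by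
    intro y
    have h2 : q ^ 2 - q ≠ 0 := by
      have h3 : q ^ 2 - q = q * (q - 1) := by ring
      rw [h3]
      exact mul_ne_zero hq0 (sub_ne_zero.mpr hq1)
    split_ifs <;> simp [hqn, h2, pow_ne_zero, hq0]
  constructor
  · intro h y
    have hy := DFunLike.congr_fun h y
    rw [wd_tau_apply_coeff, Finsupp.smul_apply, smul_eq_mul] at hy
    have h0 := add_eq_left.mp hy
    rcases mul_eq_zero.mp h0 with h1 | h1
    · exact absurd h1 (hc y)
    · exact sub_eq_zero.mp h1
  · intro h
    ext y
    rw [wd_tau_apply_coeff, Finsupp.smul_apply, smul_eq_mul, h y, sub_self, mul_zero, add_zero]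

lemma wd_walk_const {B V : Type*} (Γ : WDigraphData B V) {K : Type*} [Field K] (v : V →₀ K)
    (hv : ∀ (i : B) (y : V), v (Γ.mate i y) = v y) :
    ∀ {a b : V}, Γ.underlying.Walk a b → v a = v b := by
  intro a b p
  induction p with
  | nil => rfl
  | cons h p ih =>
    obtain ⟨i, hi⟩ := h
    rw [← ih, ← hi]
    exact (hv i _).symm

end Aux

noncomputable section
set_option synthInstance.maxHeartbeats 1000000
set_option maxHeartbeats 1000000

/-- If `Γ` is a `W`-digraph with finite vertex set and `F` is a subfield
of `ℂ`, then the number of connected components of `Γ` equals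
`⟨M(Γ)^F, ind⟩ = dim_{F(u)} {v ∈ M(Γ)^F : h v = ind(h) v for all h ∈ H^F}`. -/
theorem wdigraph_components_eq_ind_multiplicity
    {B W V : Type*} [Group W] {M : CoxeterMatrix B} (cs : CoxeterSystem M W)
    (F : Subfield ℂ)
    -- `H` is the Hecke algebra of `(W, S)` over `F(u)`, with standard basis `T`
    (H : Type*) [Ring H] [Algebra (RatFunc F) H]
    (T : W → H) (bT : Module.Basis W (RatFunc F) H) (hbT : ∀ w, bT w = T w)
    (hT1 : T 1 = 1)
    (hTmul : ∀ (i : B) (w : W), cs.length w < cs.length (cs.simple i * w) →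
      T (cs.simple i) * T w = T (cs.simple i * w))
    (hTsq : ∀ i : B, T (cs.simple i) * T (cs.simple i) =
      (RatFunc.X ^ 2 : RatFunc F) • (1 : H) +
        ((RatFunc.X ^ 2 - 1 : RatFunc F)) • T (cs.simple i))
    -- `Γ` is a `W`-digraph with finite vertex set, with `H^F`-module `M(Γ)^F` given by `ρ`
    [Finite V] (Γ : WDigraphData B V)
    (ρ : H →ₐ[RatFunc F] Module.End (RatFunc F) (V →₀ RatFunc F))
    (hρ : ∀ i : B, ρ (T (cs.simple i)) = Γ.tau (RatFunc F) RatFunc.X i)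
    -- `ind` is the index character of `H^F`
    (ind : H →ₐ[RatFunc F] RatFunc F)
    (hind : ∀ w : W, ind (T w) = (RatFunc.X : RatFunc F) ^ (2 * cs.length w)) :
    Nat.card Γ.underlying.ConnectedComponent =
      Module.finrank (RatFunc F) (charSpace ρ ind) := by
  classical
  haveI := Fintype.ofFinite V
  set K := RatFunc F with hK
  set q : RatFunc F := RatFunc.X with hqdef
  -- basic nonvanishing facts about q = X
  have hq0 : q ≠ 0 := RatFunc.X_ne_zero
  have hq1 : q ≠ 1 := by
    intro h
    have h1 : (RatFunc.X - 1 : RatFunc F) =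
        algebraMap (Polynomial F) _ (Polynomial.X - Polynomial.C 1) := by
      simp
    have h2 : (RatFunc.X - 1 : RatFunc F) ≠ 0 := by
      rw [h1]
      exact RatFunc.algebraMap_ne_zero (Polynomial.X_sub_C_ne_zero 1)
    exact h2 (by rw [← h]; ring)
  have hqn : q + 1 ≠ 0 := by
    have h1 : (RatFunc.X + 1 : RatFunc F) =
        algebraMap (Polynomial F) _ (Polynomial.X + Polynomial.C 1) := by
      simp
    rw [hqdef, h1]
    exact RatFunc.algebraMap_ne_zero (Polynomial.X_add_C_ne_zero 1)
  -- membership in charSpace is equivalent to mate-invariance of coefficients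
  have hmem : ∀ v : V →₀ K, v ∈ charSpace ρ ind ↔ ∀ (i : B) (y : V), v (Γ.mate i y) = v y := by
    intro v
    constructor
    · intro hv i
      have h := hv (T (cs.simple i))
      rw [hρ i, hind, cs.length_simple, mul_one] at h
      exact (wd_tau_eigen_iff Γ hq0 hq1 hqn i v).mp h
    · intro hv
      have hsimple : ∀ i : B, ρ (T (cs.simple i)) v = ind (T (cs.simple i)) • v := by
        intro i
        rw [hρ i, hind, cs.length_simple, mul_one]
        exact (wd_tau_eigen_iff Γ hq0 hq1 hqn i v).mpr (hv i)
      have hw : ∀ (n : ℕ) (w : W), cs.length w = n → ρ (T w) v = ind (T w) • v := by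
        intro n
        induction n using Nat.strong_induction_on with
        | _ n ih =>
          intro w hlen
          rcases eq_or_ne w 1 with rfl | hne
          · rw [hT1, map_one, map_one, one_smul]
            rfl
          · obtain ⟨i, hi⟩ := cs.exists_leftDescent_of_ne_one hne
            have hmul : T (cs.simple i) * T (cs.simple i * w) = T w := by
              have h2 : cs.length (cs.simple i * w) <
                  cs.length (cs.simple i * (cs.simple i * w)) := by
                rw [cs.simple_mul_simple_cancel_left]
                exact hi
              have h3 := hTmul i (cs.simple i * w) h2
              rwa [cs.simple_mul_simple_cancel_left] at h3
            have hlt : cs.length (cs.simple i * w) < n := hlen ▸ hi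
            have hrec := ih _ hlt (cs.simple i * w) rfl
            calc ρ (T w) v = ρ (T (cs.simple i)) (ρ (T (cs.simple i * w)) v) := by
                  rw [← hmul, map_mul]; rfl
              _ = ρ (T (cs.simple i)) (ind (T (cs.simple i * w)) • v) := by rw [hrec]
              _ = ind (T (cs.simple i * w)) • (ρ (T (cs.simple i)) v) :=
                  (ρ (T (cs.simple i))).map_smul _ _
              _ = ind (T (cs.simple i * w)) • (ind (T (cs.simple i)) • v) := by
                  rw [hsimple i]
              _ = ind (T w) • v := by
                  rw [← hmul, map_mul, mul_comm, mul_smul]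
      -- extend from the basis T to all of H by linearity
      intro h
      let L1 : H →ₗ[K] (V →₀ K) :=
        { toFun := fun h => ρ h v
          map_add' := fun a b => by
            show ρ (a + b) v = ρ a v + ρ b v
            rw [map_add]; rfl
          map_smul' := fun c a => by
            show ρ (c • a) v = c • (ρ a v)
            rw [map_smul]; rfl }
      let L2 : H →ₗ[K] (V →₀ K) :=
        { toFun := fun h => ind h • v
          map_add' := fun a b => by
            show ind (a + b) • v = ind a • v + ind b • v
            rw [map_add, add_smul]
          map_smul' := fun c a => by
            show ind (c • a) • v = c • (ind a • v)
            rw [map_smul, smul_eq_mul, mul_smul] }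
      have hL : L1 = L2 := by
        apply bT.ext
        intro w
        show ρ (bT w) v = ind (bT w) • v
        rw [hbT]
        exact hw (cs.length w) w rfl
      exact LinearMap.congr_fun hL h
  -- the eigenspace is the image of functions on connected components
  haveI : Finite Γ.underlying.ConnectedComponent :=
    Finite.of_surjective Γ.underlying.connectedComponentMk (fun c => c.exists_rep)
  haveI : Fintype Γ.underlying.ConnectedComponent := Fintype.ofFinite _
  let Φ : (Γ.underlying.ConnectedComponent → K) →ₗ[K] (V →₀ K) :=
    (Finsupp.linearEquivFunOnFinite K K V).symm.toLinearMap ∘ₗ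
      LinearMap.funLeft K K Γ.underlying.connectedComponentMk
  have hΦ_apply : ∀ (f : Γ.underlying.ConnectedComponent → K) (y : V),
      Φ f y = f (Γ.underlying.connectedComponentMk y) := by
    intro f y
    rfl
  have hmksurj : Function.Surjective Γ.underlying.connectedComponentMk :=
    fun c => c.exists_rep
  have hΦinj : Function.Injective Φ := by
    have h1 := (Finsupp.linearEquivFunOnFinite K K V).symm.injective
    have h2 := LinearMap.funLeft_injective_of_surjective K K
      Γ.underlying.connectedComponentMk hmksurj
    exact fun a b hab => h2 (h1 hab)
  have hrange : LinearMap.range Φ = charSpace ρ ind := by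
    apply le_antisymm
    · rintro _ ⟨f, rfl⟩
      rw [hmem]
      intro i y
      rw [hΦ_apply, hΦ_apply]
      congr 1
      have hadj : Γ.underlying.Adj y (Γ.mate i y) := ⟨i, rfl⟩
      exact (SimpleGraph.ConnectedComponent.connectedComponentMk_eq_of_adj hadj).symm
    · intro v hv
      rw [hmem] at hv
      refine ⟨SimpleGraph.ConnectedComponent.lift (fun x => v x)
        (fun a b p _ => wd_walk_const Γ v hv p), ?_⟩
      ext y
      rw [hΦ_apply]
      rfl
  rw [Nat.card_eq_fintype_card, ← hrange, LinearMap.finrank_range_of_inj hΦinj,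
    Module.finrank_fintype_fun_eq_card]

end
end

section
/- If F is a subfield of ℂ, Ψ is a W-graph over F with vertex-labeling function x ↦ I_x ⊆ S, and M(Ψ)_{ind} ≠ {0} (i.e. some nonzero v ∈ M(Ψ) satisfies h v = ind(h) v for all h ∈ H^F), then there exists a vertex x₀ of Ψ with I_{x₀} = ∅. -/
open scoped Classical

noncomputable section
set_option synthInstance.maxHeartbeats 1000000
set_option maxHeartbeats 1000000

/-- If `F` is a subfield of `ℂ`, `Ψ` is a `W`-graph over `F` with
vertex labels `I_x ⊆ S`, and `M(Ψ)_{ind} ≠ {0}`, then some vertex `x₀` of `Ψ` has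
`I_{x₀} = ∅`. -/
theorem wgraph_ind_eigenvector_empty_label
    {B W X : Type*} [Group W] {M : CoxeterMatrix B} (cs : CoxeterSystem M W)
    (F : Subfield ℂ)
    -- `H` is the Hecke algebra of `(W, S)` over `F(u)`, with standard basis `T`
    (H : Type*) [Ring H] [Algebra (RatFunc F) H]
    (T : W → H) (bT : Module.Basis W (RatFunc F) H) (hbT : ∀ w, bT w = T w)
    (hT1 : T 1 = 1)
    (hTmul : ∀ (i : B) (w : W), cs.length w < cs.length (cs.simple i * w) →
      T (cs.simple i) * T w = T (cs.simple i * w))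
    (hTsq : ∀ i : B, T (cs.simple i) * T (cs.simple i) =
      (RatFunc.X ^ 2 : RatFunc F) • (1 : H) +
        ((RatFunc.X ^ 2 - 1 : RatFunc F)) • T (cs.simple i))
    -- `Ψ` is a `W`-graph over `F`, with `H^F`-module `M(Ψ)` given by `σ`
    [Fintype X] (Ψ : WGraphData B X F)
    (σ : H →ₐ[RatFunc F] Module.End (RatFunc F) (X →₀ RatFunc F))
    (hσ : ∀ i : B, σ (T (cs.simple i)) = Ψ.tau (RatFunc F) RatFunc.X i)
    -- `ind` is the index character of `H^F`
    (ind : H →ₐ[RatFunc F] RatFunc F)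
    (hind : ∀ w : W, ind (T w) = (RatFunc.X : RatFunc F) ^ (2 * cs.length w))
    -- `M(Ψ)_{ind} ≠ {0}`
    (v : X →₀ RatFunc F) (hv : v ≠ 0) (hvind : ∀ h : H, σ h v = ind h • v) :
    ∃ x₀ : X, Ψ.I x₀ = ∅ := by
  classical
  -- clear denominators: find `b` with `b • v z` a polynomial for all `z`
  obtain ⟨b, hb⟩ := IsLocalization.exist_integer_multiples_of_finite
    (nonZeroDivisors (Polynomial F)) (S := RatFunc F) (fun z : X => v z)
  have hb' : ∀ z : X, ∃ pz : Polynomial F,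
      algebraMap (Polynomial F) (RatFunc F) pz = (b : Polynomial F) • v z :=
    fun z => RingHom.mem_range.mp (hb z)
  choose p hp using hb'
  have hβ : algebraMap (Polynomial F) (RatFunc F) (b : Polynomial F) ≠ 0 :=
    (map_ne_zero_iff _ (IsFractionRing.injective (Polynomial F) (RatFunc F))).mpr
      (nonZeroDivisors.coe_ne_zero b)
  -- pick `x` in the support of `v` with `(p x).degree` maximal
  obtain ⟨x, hxs, hmax⟩ := v.support.exists_max_image (fun z => (p z).degree)
    (Finsupp.support_nonempty_iff.mpr hv)
  have hvx : v x ≠ 0 := Finsupp.mem_support_iff.mp hxs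
  refine ⟨x, ?_⟩
  by_contra hne
  obtain ⟨i, hi⟩ := Set.nonempty_iff_ne_empty.mpr hne
  -- the eigenvector equation for `T (s i)`, at the coefficient of `x`
  have heq := hvind (T (cs.simple i))
  rw [hσ i, hind, cs.length_simple] at heq
  have hx := DFunLike.congr_fun heq x
  rw [Finsupp.smul_apply, smul_eq_mul] at hx
  set q : RatFunc F := RatFunc.X with hq
  have htau : ((Ψ.tau (RatFunc F) q i) v) x
      = ∑ z ∈ v.support, v z * (Ψ.tauFun (RatFunc F) q i z) x := by
    rw [WGraphData.tau, Finsupp.lsum_apply, Finsupp.sum_apply]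
    exact Finset.sum_congr rfl fun z _ => by
      simp [LinearMap.toSpanSingleton_apply, Finsupp.smul_apply, smul_eq_mul]
  have htf : ∀ z : X, (Ψ.tauFun (RatFunc F) q i z) x =
      (if i ∈ Ψ.I z then (if z = x then (-1 : RatFunc F) else 0)
      else (if z = x then q ^ 2 else 0) + q * algebraMap F (RatFunc F) (Ψ.mu x z)) := by
    intro z
    rw [WGraphData.tauFun]
    by_cases hz : i ∈ Ψ.I z
    · rcases eq_or_ne z x with rfl | hzx
      · simp [hz, Finsupp.single_apply]
      · simp [hz, hzx, Finsupp.single_apply]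
    · have hsum : ∀ y : X,
          ((if i ∈ Ψ.I y then
              algebraMap F (RatFunc F) (Ψ.mu y z) • Finsupp.single y (1 : RatFunc F)
            else 0) x)
          = if y = x then (if i ∈ Ψ.I y then algebraMap F (RatFunc F) (Ψ.mu y z) else 0)
            else 0 := by
        intro y
        by_cases hy : i ∈ Ψ.I y <;> simp [hy, Finsupp.single_apply]
      simp only [hz, if_false, Finsupp.add_apply, Finsupp.smul_apply, Finsupp.single_apply,
        smul_eq_mul, Finsupp.finset_sum_apply, hsum, Finset.sum_ite_eq', Finset.mem_univ,
        if_true, hi, mul_ite, mul_one, mul_zero]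
  -- the key identity over `RatFunc F`
  set S : RatFunc F :=
    ∑ z ∈ v.support, (if i ∈ Ψ.I z then 0 else algebraMap F (RatFunc F) (Ψ.mu x z) * v z)
    with hS
  have key : q * S = (q ^ 2 + 1) * v x := by
    have hx2 : (∑ z ∈ v.support, v z * (Ψ.tauFun (RatFunc F) q i z) x) = q ^ 2 * v x := by
      rw [← htau]
      simpa [pow_succ, pow_zero] using hx
    have hsplit : ∀ z ∈ v.support, v z * (Ψ.tauFun (RatFunc F) q i z) x
        = (if z = x then (if i ∈ Ψ.I z then -1 else q ^ 2) * v z else 0)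
          + q * (if i ∈ Ψ.I z then 0 else algebraMap F (RatFunc F) (Ψ.mu x z) * v z) := by
      intro z _
      rw [htf z]
      by_cases hzx : z = x
      · subst hzx
        by_cases hz : i ∈ Ψ.I z <;> simp [hz] <;> ring
      · by_cases hz : i ∈ Ψ.I z <;> simp [hz, hzx] <;> ring
    rw [Finset.sum_congr rfl hsplit, Finset.sum_add_distrib, ← Finset.mul_sum,
      Finset.sum_ite_eq' v.support x, if_pos hxs, if_pos hi] at hx2
    rw [← hS] at hx2
    linear_combination hx2
  -- convert to a polynomial identity
  set Sp : Polynomial F :=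
    ∑ z ∈ v.support, (if i ∈ Ψ.I z then 0 else Polynomial.C (Ψ.mu x z) * p z)
    with hSp
  have hmapS : algebraMap (Polynomial F) (RatFunc F) Sp
      = algebraMap (Polynomial F) (RatFunc F) (b : Polynomial F) * S := by
    rw [hSp, map_sum, hS, Finset.mul_sum]
    refine Finset.sum_congr rfl fun z _ => ?_
    by_cases hz : i ∈ Ψ.I z
    · simp [hz]
    · rw [if_neg hz, if_neg hz, map_mul, hp z, Algebra.smul_def,
        IsScalarTower.algebraMap_apply F (Polynomial F) (RatFunc F) (Ψ.mu x z),
        Polynomial.algebraMap_eq]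
      ring
  have hpoly : Polynomial.X * Sp = (Polynomial.X ^ 2 + 1) * p x := by
    apply IsFractionRing.injective (Polynomial F) (RatFunc F)
    rw [map_mul, map_mul, map_add, map_one, map_pow, RatFunc.algebraMap_X, hmapS, hp x,
      Algebra.smul_def]
    calc q * (algebraMap (Polynomial F) (RatFunc F) (b : Polynomial F) * S)
        = algebraMap (Polynomial F) (RatFunc F) (b : Polynomial F) * (q * S) := by ring
      _ = algebraMap (Polynomial F) (RatFunc F) (b : Polynomial F) * ((q ^ 2 + 1) * v x) := by
          rw [key]
      _ = (q ^ 2 + 1) * (algebraMap (Polynomial F) (RatFunc F) (b : Polynomial F) * v x) := by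
          ring
  -- degree contradiction
  have hpx : p x ≠ 0 := by
    intro h0
    have h1 := hp x
    rw [h0, map_zero, Algebra.smul_def] at h1
    exact hvx ((mul_eq_zero.mp h1.symm).resolve_left hβ)
  have hdS : Sp.degree ≤ (p x).degree := by
    refine (Polynomial.degree_sum_le _ _).trans (Finset.sup_le fun z hz => ?_)
    by_cases hzi : i ∈ Ψ.I z
    · simp [hzi]
    · rw [if_neg hzi]
      calc (Polynomial.C (Ψ.mu x z) * p z).degree
          ≤ Polynomial.degree (Polynomial.C (Ψ.mu x z)) + (p z).degree :=
            Polynomial.degree_mul_le _ _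
        _ ≤ 0 + (p z).degree := add_le_add Polynomial.degree_C_le le_rfl
        _ = (p z).degree := zero_add _
        _ ≤ (p x).degree := hmax z hz
  have hL : ((Polynomial.X ^ 2 + 1 : Polynomial F) * p x).degree = 2 + (p x).degree := by
    rw [Polynomial.degree_mul, ← Polynomial.C_1,
      Polynomial.degree_X_pow_add_C (by norm_num : 0 < 2)]
    norm_cast
  have hfinal : (2 : WithBot ℕ) + (p x).degree ≤ 1 + (p x).degree := by
    calc (2 : WithBot ℕ) + (p x).degree = ((Polynomial.X ^ 2 + 1 : Polynomial F) * p x).degree :=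
          hL.symm
      _ = (Polynomial.X * Sp).degree := by rw [hpoly]
      _ = 1 + Sp.degree := by rw [Polynomial.degree_mul, Polynomial.degree_X]
      _ ≤ 1 + (p x).degree := add_le_add le_rfl hdS
  rw [Polynomial.degree_eq_natDegree hpx] at hfinal
  norm_cast at hfinal
  omega

end
end

section
/- If F is a subfield of ℂ and Ψ is a W-graph over F with vertex set X and vertex-labeling x ↦ I_x, then the eigenspace M(Ψ)_{sgn} = {v ∈ M(Ψ) : h v = sgn(h) v for all h ∈ H^F} has F(u)-basis {x ∈ X : I_x = S}; in particular ⟨M(Ψ), sgn⟩ = N_Ψ(S). -/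
open scoped Classical

noncomputable section
set_option synthInstance.maxHeartbeats 1000000
set_option maxHeartbeats 1000000

/- Auxiliary lemma: a basis of singles for a `Finsupp.supported` submodule. -/
lemma wgraph_aux_basis {K X : Type*} [Field K] [Fintype X] (s : Set X)
    (p : Submodule K (X →₀ K)) (hp : p = Finsupp.supported K K s) :
    (∃ b : Module.Basis s K p, ∀ x : s, (b x : X →₀ K) = Finsupp.single x.val 1) ∧
      Module.finrank K p = Nat.card s := by
  subst hp
  have hmem : ∀ x : s, Finsupp.single (x : X) (1 : K) ∈ Finsupp.supported K K s := by
    intro x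
    rw [Finsupp.mem_supported]
    intro z hz
    have hzx : z = (x : X) := by simpa using Finsupp.support_single_subset hz
    rw [hzx]; exact x.prop
  let vfam : s → Finsupp.supported K K s := fun x => ⟨Finsupp.single (x : X) 1, hmem x⟩
  have hli : LinearIndependent K vfam := by
    have h1 : LinearIndependent K
        ((Finsupp.supported K K s).subtype ∘ vfam) :=
      (Finsupp.basisSingleOne.linearIndependent).comp Subtype.val Subtype.val_injective
    exact LinearIndependent.of_comp _ h1
  have himg : Submodule.map (Finsupp.supported K K s).subtype
        (Submodule.span K (Set.range vfam))
      = Submodule.map (Finsupp.supported K K s).subtype ⊤ := by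
    rw [Submodule.map_span, Submodule.map_top, Submodule.range_subtype]
    have himage : (Finsupp.supported K K s).subtype '' Set.range vfam
        = (fun i => Finsupp.single i (1 : K)) '' s := by
      ext y
      constructor
      · rintro ⟨_, ⟨x, rfl⟩, rfl⟩
        exact ⟨x.val, x.prop, rfl⟩
      · rintro ⟨i, hi, rfl⟩
        exact ⟨vfam ⟨i, hi⟩, ⟨⟨i, hi⟩, rfl⟩, rfl⟩
    rw [himage]
    exact (Finsupp.supported_eq_span_single K s).symm
  have hspan : Submodule.span K (Set.range vfam) = ⊤ :=
    Submodule.map_injective_of_injective (Submodule.injective_subtype _) himg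
  let b := Module.Basis.mk hli hspan.ge
  refine ⟨⟨b, ?_⟩, ?_⟩
  · intro x
    show ((Module.Basis.mk hli hspan.ge) x : X →₀ K) = _
    rw [Module.Basis.mk_apply]
  · haveI : Fintype s := Set.Finite.fintype (Set.toFinite s)
    rw [Module.finrank_eq_card_basis b, Nat.card_eq_fintype_card]

/-- If `F` is a subfield of `ℂ` and `Ψ` is a `W`-graph over `F`, then the
eigenspace `M(Ψ)_{sgn} = {v ∈ M(Ψ) : h v = sgn(h) v for all h ∈ H^F}` has `F(u)`-basis
`{x ∈ X : I_x = S}`; in particular `⟨M(Ψ), sgn⟩ = N_Ψ(S)`. -/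
theorem wgraph_sgn_eigenspace_basis
    {B W X : Type*} [Group W] {M : CoxeterMatrix B} (cs : CoxeterSystem M W)
    (F : Subfield ℂ)
    -- `H` is the Hecke algebra of `(W, S)` over `F(u)`, with standard basis `T`
    (H : Type*) [Ring H] [Algebra (RatFunc F) H]
    (T : W → H) (bT : Module.Basis W (RatFunc F) H) (hbT : ∀ w, bT w = T w)
    (hT1 : T 1 = 1)
    (hTmul : ∀ (i : B) (w : W), cs.length w < cs.length (cs.simple i * w) →
      T (cs.simple i) * T w = T (cs.simple i * w))
    (hTsq : ∀ i : B, T (cs.simple i) * T (cs.simple i) =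
      (RatFunc.X ^ 2 : RatFunc F) • (1 : H) +
        ((RatFunc.X ^ 2 - 1 : RatFunc F)) • T (cs.simple i))
    -- `Ψ` is a `W`-graph over `F`, with `H^F`-module `M(Ψ)` given by `σ`
    [Fintype X] (Ψ : WGraphData B X F)
    (σ : H →ₐ[RatFunc F] Module.End (RatFunc F) (X →₀ RatFunc F))
    (hσ : ∀ i : B, σ (T (cs.simple i)) = Ψ.tau (RatFunc F) RatFunc.X i)
    -- `sgn` is the sign character of `H^F`
    (sgn : H →ₐ[RatFunc F] RatFunc F)
    (hsgn : ∀ w : W, sgn (T w) = (-1 : RatFunc F) ^ cs.length w) :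
    (∃ b : Module.Basis {x : X // Ψ.I x = Set.univ} (RatFunc F) (charSpace σ sgn),
        ∀ x : {x : X // Ψ.I x = Set.univ},
          (b x : X →₀ RatFunc F) = Finsupp.single x.val 1) ∧
      Module.finrank (RatFunc F) (charSpace σ sgn) = Ψ.N Set.univ := by
  set K := RatFunc F with hK
  set q : RatFunc F := RatFunc.X with hqdef
  set s : Set X := {x | Ψ.I x = Set.univ} with hs
  have hq2 : (q ^ 2 + 1 : K) ≠ 0 := by
    have h : (q ^ 2 + 1 : K) =
        algebraMap (Polynomial F) (RatFunc F) (Polynomial.X ^ 2 + 1) := by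
      rw [map_add, map_pow, map_one, RatFunc.algebraMap_X]
    rw [h]
    apply RatFunc.algebraMap_ne_zero
    intro hc
    have := congrArg (Polynomial.coeff · 0) hc
    simp at this
  -- tau on single vertices
  have htau_single : ∀ (i : B) (x : X),
      Ψ.tau K q i (Finsupp.single x 1) = Ψ.tauFun K q i x := by
    intro i x
    simp [WGraphData.tau, Finsupp.lsum_single, LinearMap.toSpanSingleton_apply]
  -- coefficient computation: if i ∉ I x then (tau i v) x = q^2 * v x
  have hcoef : ∀ (i : B) (x : X), i ∉ Ψ.I x → ∀ v : X →₀ K,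
      (Ψ.tau K q i v) x = q ^ 2 * v x := by
    intro i x hix v
    have h1 : (Ψ.tau K q i v) = v.sum fun z c => c • Ψ.tauFun K q i z := by
      simp [WGraphData.tau, Finsupp.lsum_apply]
      rfl
    rw [h1, Finsupp.sum_apply]
    have key : ∀ z : X, v z * (Ψ.tauFun K q i z) x =
        if z = x then q ^ 2 * v z else 0 := by
      intro z
      by_cases hz : z = x
      · subst hz
        rw [if_pos rfl]
        unfold WGraphData.tauFun
        rw [if_neg hix]
        simp only [Finsupp.add_apply, Finsupp.smul_apply, Finsupp.single_eq_same]
        have hsum : (∑ y : X, if i ∈ Ψ.I y then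
            algebraMap F K (Ψ.mu y z) • Finsupp.single y (1 : K) else 0) z = 0 := by
          rw [Finsupp.finset_sum_apply]
          apply Finset.sum_eq_zero
          intro y _
          by_cases hy : i ∈ Ψ.I y
          · rw [if_pos hy, Finsupp.smul_apply, Finsupp.single_apply,
              if_neg (by rintro rfl; exact hix hy), smul_zero]
          · rw [if_neg hy]; rfl
        rw [hsum]
        simp [mul_comm]
      · rw [if_neg hz]
        unfold WGraphData.tauFun
        by_cases hzi : i ∈ Ψ.I z
        · rw [if_pos hzi]
          simp [Finsupp.single_apply, hz]
        · rw [if_neg hzi]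
          simp only [Finsupp.add_apply, Finsupp.smul_apply,
            Finsupp.single_apply, if_neg hz, smul_zero, zero_add]
          have hsum : (∑ y : X, if i ∈ Ψ.I y then
              algebraMap F K (Ψ.mu y z) • Finsupp.single y (1 : K) else 0) x = 0 := by
            rw [Finsupp.finset_sum_apply]
            apply Finset.sum_eq_zero
            intro y _
            by_cases hy : i ∈ Ψ.I y
            · rw [if_pos hy, Finsupp.smul_apply, Finsupp.single_apply,
                if_neg (by rintro rfl; exact hix hy), smul_zero]
            · rw [if_neg hy]; rfl
          rw [hsum]
          simp
    calc (v.sum fun z c => (c • Ψ.tauFun K q i z) x)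
        = ∑ z ∈ v.support, v z * (Ψ.tauFun K q i z) x := by
          rw [Finsupp.sum]
          exact Finset.sum_congr rfl fun z _ => by
            rw [Finsupp.smul_apply, smul_eq_mul]
      _ = ∑ z ∈ v.support, if z = x then q ^ 2 * v z else 0 := by
          exact Finset.sum_congr rfl fun z _ => key z
      _ = q ^ 2 * v x := by
          rw [Finset.sum_ite_eq' v.support x (fun z => q ^ 2 * v z)]
          by_cases hx : x ∈ v.support
          · rw [if_pos hx]
          · rw [if_neg hx, Finsupp.notMem_support_iff.mp hx, mul_zero]
  -- if supported on s then tau i v = -v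
  have htau_supported : ∀ v ∈ Finsupp.supported K K s, ∀ i : B,
      Ψ.tau K q i v = -v := by
    intro v hv i
    have h1 : (Ψ.tau K q i v) = v.sum fun z c => c • Ψ.tauFun K q i z := by
      simp [WGraphData.tau, Finsupp.lsum_apply]; rfl
    rw [h1]
    have h2 : (v.sum fun z c => c • Ψ.tauFun K q i z) =
        v.sum fun z c => -Finsupp.single z c := by
      apply Finsupp.sum_congr
      intro z hz
      have hzs : Ψ.I z = Set.univ := hv hz
      have hiz : i ∈ Ψ.I z := by rw [hzs]; trivial
      unfold WGraphData.tauFun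
      rw [if_pos hiz, smul_neg, Finsupp.smul_single, smul_eq_mul, mul_one]
    rw [h2]
    have h3 : (v.sum fun z c => -Finsupp.single z c) =
        -(v.sum fun z c => Finsupp.single z c) := by
      rw [Finsupp.sum, Finsupp.sum, Finset.sum_neg_distrib]
    rw [h3, Finsupp.sum_single]
  -- membership in charSpace is the pointwise condition
  have hmemchar : ∀ v : X →₀ K, v ∈ charSpace σ sgn ↔ ∀ h, σ h v = sgn h • v :=
    fun v => Iff.rfl
  -- charSpace = supported
  have hchar : charSpace σ sgn = Finsupp.supported K K s := by
    apply le_antisymm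
    · intro v hv
      rw [Finsupp.mem_supported]
      intro x hx
      by_contra hxs
      have hne : Ψ.I x ≠ Set.univ := hxs
      obtain ⟨i, hi⟩ : ∃ i, i ∉ Ψ.I x := by
        by_contra hco
        push_neg at hco
        exact hne (Set.eq_univ_of_forall hco)
      have h1 := (hmemchar v).mp hv (T (cs.simple i))
      rw [hσ i, hsgn, cs.length_simple] at h1
      have h2 := DFunLike.congr_fun h1 x
      rw [hcoef i x hi v] at h2
      rw [Finsupp.smul_apply] at h2
      have h3 : (q ^ 2 + 1) * v x = 0 := by
        rw [add_mul, one_mul, h2]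
        simp
      have h4 : v x = 0 := by
        rcases mul_eq_zero.mp h3 with h | h
        · exact absurd h hq2
        · exact h
      exact Finsupp.mem_support_iff.mp hx h4
    · intro v hv
      rw [hmemchar]
      -- first handle all T w
      have hTw : ∀ (l : List B), l.length = cs.length (cs.wordProd l) →
          σ (T (cs.wordProd l)) v = ((-1 : K) ^ l.length) • v := by
        intro l
        induction l with
        | nil =>
          intro _
          rw [cs.wordProd_nil, hT1, map_one]
          simp
        | cons i l ih =>
          intro hl
          rw [List.length_cons] at hl
          have hle := cs.length_wordProd_le l
          have h2 : cs.length (cs.wordProd (i :: l)) ≤ cs.length (cs.wordProd l) + 1 := by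
            rw [cs.wordProd_cons]
            rcases cs.length_simple_mul (cs.wordProd l) i with h | h
            · omega
            · omega
          rw [cs.wordProd_cons] at hl
          have hlen1 : cs.length (cs.wordProd l) = l.length := by
            rw [cs.wordProd_cons] at h2
            omega
          have hlt : cs.length (cs.wordProd l) <
              cs.length (cs.simple i * cs.wordProd l) := by omega
          have hm := hTmul i (cs.wordProd l) hlt
          rw [cs.wordProd_cons, ← hm, map_mul, Module.End.mul_apply,
            ih hlen1.symm, map_smul, hσ i, htau_supported v hv i]
          rw [List.length_cons, pow_succ, mul_smul, neg_one_smul, smul_neg]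
      have hall : ∀ w : W, σ (T w) v = sgn (T w) • v := by
        intro w
        obtain ⟨l, hl, rfl⟩ := cs.exists_reduced_word w
        have hl' : l.length = cs.length (cs.wordProd l) := by
          unfold CoxeterSystem.IsReduced at hl; omega
        rw [hsgn, ← hl']
        exact hTw l hl'
      -- extend to all of H using the basis
      let L : H →ₗ[K] (X →₀ K) :=
        { toFun := fun h => σ h v - sgn h • v
          map_add' := by
            intro a b
            simp only [map_add, LinearMap.add_apply, add_smul]
            abel
          map_smul' := by
            intro c a
            simp only [map_smul, LinearMap.smul_apply, RingHom.id_apply,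
              smul_eq_mul, mul_smul, smul_sub] }
      have hL0 : L = 0 := by
        apply bT.ext
        intro w
        rw [hbT]
        show σ (T w) v - sgn (T w) • v = 0
        rw [hall w, sub_self]
      intro h
      have := DFunLike.congr_fun hL0 h
      simpa [L, sub_eq_zero] using this
  exact wgraph_aux_basis s (charSpace σ sgn) hchar

end
end

section
/- Let F be a subfield of ℂ and Ψ a W-graph over F with vertex set X and vertex-labeling x ↦ I_x. Let M₀ be the F(u)-span in M(Ψ) of {x ∈ X : I_x ≠ ∅}. Then M₀ is an H^F-submodule of M(Ψ) and (M₀)_{ind} = {v ∈ M₀ : h v = ind(h) v for all h ∈ H^F} = {0}. -/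
open scoped Classical

noncomputable section
set_option synthInstance.maxHeartbeats 1000000
set_option maxHeartbeats 1000000


lemma intDegree_sum_le' {K : Type*} [Field K] {α : Type*} (s : Finset α) (f : α → RatFunc K) (d : ℤ)
    (h : ∀ x ∈ s, f x ≠ 0 → (f x).intDegree ≤ d) :
    (∑ x ∈ s, f x) = 0 ∨ (∑ x ∈ s, f x).intDegree ≤ d := by
  induction s using Finset.induction with
  | empty => left; simp
  | @insert a s ha ih =>
    rw [Finset.sum_insert ha]
    have ih' := ih (fun x hx => h x (Finset.mem_insert_of_mem hx))
    have ha' := h a (Finset.mem_insert_self a s)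
    rcases ih' with h0 | hle
    · rw [h0, add_zero]
      by_cases hfa : f a = 0
      · left; exact hfa
      · right; exact ha' hfa
    · by_cases hfa : f a = 0
      · rw [hfa, zero_add]; right; exact hle
      · by_cases hsum : f a + ∑ x ∈ s, f x = 0
        · left; exact hsum
        · right
          by_cases hs0 : (∑ x ∈ s, f x) = 0
          · rw [hs0, add_zero]; exact ha' hfa
          · calc (f a + ∑ x ∈ s, f x).intDegree ≤ max (f a).intDegree (∑ x ∈ s, f x).intDegree :=
                RatFunc.intDegree_add_le hs0 hsum
              _ ≤ d := max_le (ha' hfa) hle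

/-- Let `F` be a subfield of `ℂ` and `Ψ` a `W`-graph over `F`.  Let `M₀`
be the `F(u)`-span in `M(Ψ)` of `{x ∈ X : I_x ≠ ∅}`.  Then `M₀` is an `H^F`-submodule of
`M(Ψ)` and `(M₀)_{ind} = {0}`. -/
theorem wgraph_span_nonempty_labels_submodule_ind_trivial
    {B W X : Type*} [Group W] {M : CoxeterMatrix B} (cs : CoxeterSystem M W)
    (F : Subfield ℂ)
    -- `H` is the Hecke algebra of `(W, S)` over `F(u)`, with standard basis `T`
    (H : Type*) [Ring H] [Algebra (RatFunc F) H]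
    (T : W → H) (bT : Module.Basis W (RatFunc F) H) (hbT : ∀ w, bT w = T w)
    (hT1 : T 1 = 1)
    (hTmul : ∀ (i : B) (w : W), cs.length w < cs.length (cs.simple i * w) →
      T (cs.simple i) * T w = T (cs.simple i * w))
    (hTsq : ∀ i : B, T (cs.simple i) * T (cs.simple i) =
      (RatFunc.X ^ 2 : RatFunc F) • (1 : H) +
        ((RatFunc.X ^ 2 - 1 : RatFunc F)) • T (cs.simple i))
    -- `Ψ` is a `W`-graph over `F`, with `H^F`-module `M(Ψ)` given by `σ`
    [Fintype X] (Ψ : WGraphData B X F)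
    (σ : H →ₐ[RatFunc F] Module.End (RatFunc F) (X →₀ RatFunc F))
    (hσ : ∀ i : B, σ (T (cs.simple i)) = Ψ.tau (RatFunc F) RatFunc.X i)
    -- `ind` is the index character of `H^F`
    (ind : H →ₐ[RatFunc F] RatFunc F)
    (hind : ∀ w : W, ind (T w) = (RatFunc.X : RatFunc F) ^ (2 * cs.length w))
    -- `M₀` is the `F(u)`-span of the basis vectors `x` with `I_x ≠ ∅`
    (M₀ : Submodule (RatFunc F) (X →₀ RatFunc F))
    (hM₀ : M₀ = Submodule.span (RatFunc F)
      ((fun x : X => Finsupp.single x (1 : RatFunc F)) '' {x : X | Ψ.I x ≠ ∅})) :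
    (∀ (h : H), ∀ m ∈ M₀, σ h m ∈ M₀) ∧
      (∀ m ∈ M₀, (∀ h : H, σ h m = ind h • m) → m = 0) := by
  classical
  set K := RatFunc F
  set q : K := RatFunc.X with hq
  -- membership of generators
  have hmem : ∀ x : X, Ψ.I x ≠ ∅ → Finsupp.single x (1 : K) ∈ M₀ := fun x hx =>
    hM₀ ▸ Submodule.subset_span ⟨x, hx, rfl⟩
  -- tau preserves M₀
  have htau : ∀ (i : B), ∀ m ∈ M₀, Ψ.tau K q i m ∈ M₀ := by
    intro i m hm
    rw [hM₀] at hm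
    induction hm using Submodule.span_induction with
    | mem z hz =>
      obtain ⟨x, hx, rfl⟩ := hz
      rw [show Ψ.tau K q i (Finsupp.single x 1) = Ψ.tauFun K q i x by
        simp [WGraphData.tau, Finsupp.lsum_single, LinearMap.toSpanSingleton_apply]]
      rw [WGraphData.tauFun]
      by_cases hIx : i ∈ Ψ.I x
      · rw [if_pos hIx]
        exact neg_mem (hmem x hx)
      · rw [if_neg hIx]
        refine add_mem (Submodule.smul_mem _ _ (hmem x hx)) (Submodule.smul_mem _ _ ?_)
        refine Submodule.sum_mem _ fun y _ => ?_
        by_cases hIy : i ∈ Ψ.I y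
        · rw [if_pos hIy]
          exact Submodule.smul_mem _ _ (hmem y (fun hE => by rw [hE] at hIy; exact hIy))
        · rw [if_neg hIy]; exact Submodule.zero_mem _
    | zero => simp only [map_zero]; exact Submodule.zero_mem _
    | add a b _ _ ha hb => rw [map_add]; exact add_mem ha hb
    | smul c a _ ha => rw [map_smul]; exact Submodule.smul_mem _ _ ha
  -- σ (T w) preserves M₀
  have hTw : ∀ n (w : W), cs.length w = n → ∀ m ∈ M₀, σ (T w) m ∈ M₀ := by
    intro n
    induction n using Nat.strong_induction_on with
    | _ n ih =>
      intro w hw m hm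
      rcases eq_or_ne w 1 with rfl | hne
      · rw [hT1, map_one]; simpa using hm
      · obtain ⟨i, hi⟩ := cs.exists_leftDescent_of_ne_one hne
        set w' := cs.simple i * w with hw'def
        have hcan : cs.simple i * w' = w := cs.simple_mul_simple_cancel_left i
        have hlen : cs.length w' < n := hw ▸ hi
        have hmul : T (cs.simple i) * T w' = T w := by
          rw [hTmul i w' (by rw [hcan, hw]; exact hlen), hcan]
        have h1 : σ (T w') m ∈ M₀ := ih (cs.length w') hlen w' rfl m hm
        rw [← hmul, map_mul]
        have := htau i _ h1
        rw [← hσ i] at this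
        exact this
  have hall : ∀ (h : H), ∀ m ∈ M₀, σ h m ∈ M₀ := by
    intro h m hm
    have hh : h ∈ Submodule.span K (Set.range bT) := by rw [bT.span_eq]; trivial
    induction hh using Submodule.span_induction with
    | mem z hz =>
      obtain ⟨w, rfl⟩ := hz
      rw [hbT]
      exact hTw (cs.length w) w rfl m hm
    | zero => simp only [map_zero]; exact Submodule.zero_mem _
    | add a b _ _ ha hb => rw [map_add]; exact add_mem ha hb
    | smul c a _ ha =>
      rw [map_smul]
      exact Submodule.smul_mem _ _ ha
  refine ⟨hall, ?_⟩
  intro m hm hchar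
  by_contra hne
  have hsupp : ∀ x ∈ m.support, Ψ.I x ≠ ∅ := by
    have hmem' : m ∈ Finsupp.supported K K {x : X | Ψ.I x ≠ ∅} := by
      rw [Finsupp.supported_eq_span_single]; exact hM₀ ▸ hm
    intro x hx
    exact (Finsupp.mem_supported K m).1 hmem' hx
  have hsne : m.support.Nonempty := Finsupp.support_nonempty_iff.2 hne
  obtain ⟨x₀, hx₀, hmax⟩ := m.support.exists_max_image (fun x => (m x).intDegree) hsne
  obtain ⟨i, hi0⟩ := Set.nonempty_iff_ne_empty.2 (hsupp x₀ hx₀)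
  -- the eigenvector equation for T_{s_i}
  have heq : Ψ.tau K q i m = (q ^ 2) • m := by
    have h1 := hchar (T (cs.simple i))
    rw [hσ i, hind, cs.length_simple, mul_one] at h1
    exact h1
  -- coefficient of x₀
  have hco : (Ψ.tau K q i m) x₀ = ∑ x ∈ m.support, m x * (Ψ.tauFun K q i x x₀) := by
    rw [WGraphData.tau, Finsupp.lsum_apply, Finsupp.sum_apply]
    rw [Finsupp.sum]
    refine Finset.sum_congr rfl fun x _ => ?_
    rw [LinearMap.toSpanSingleton_apply, Finsupp.smul_apply, smul_eq_mul]
  have hval : ∀ x ∈ m.support, (Ψ.tauFun K q i x) x₀ =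
      if x = x₀ then -1 else if i ∈ Ψ.I x then 0
        else q * algebraMap F K (Ψ.mu x₀ x) := by
    intro x _
    rw [WGraphData.tauFun]
    by_cases hIx : i ∈ Ψ.I x
    · rw [if_pos hIx]
      by_cases hxx : x = x₀
      · subst hxx; simp
      · simp [Finsupp.single_apply, hxx, hIx]
    · have hxx : x ≠ x₀ := fun h => hIx (h ▸ hi0)
      rw [if_neg hIx, if_neg hxx, if_neg hIx]
      rw [Finsupp.add_apply, Finsupp.smul_apply, Finsupp.smul_apply,
        Finsupp.single_apply, if_neg hxx, Finsupp.finset_sum_apply]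
      rw [Finset.sum_eq_single x₀]
      · rw [if_pos hi0]; simp [smul_eq_mul]; rw [Algebra.smul_def]; ring
      · intro y _ hy
        by_cases hIy : i ∈ Ψ.I y
        · rw [if_pos hIy, Finsupp.smul_apply, Finsupp.single_apply, if_neg hy,
            smul_eq_mul, mul_zero]
        · rw [if_neg hIy, Finsupp.coe_zero, Pi.zero_apply]
      · intro hx'
        exact absurd (Finset.mem_univ x₀) hx'
  set c := m x₀ with hc_def
  have hc : c ≠ 0 := Finsupp.mem_support_iff.1 hx₀
  set d := c.intDegree with hd_def
  set S := ∑ x ∈ m.support.erase x₀,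
      m x * (if i ∈ Ψ.I x then 0 else q * algebraMap F K (Ψ.mu x₀ x)) with hS_def
  have hkey : (q ^ 2 + 1) * c = S := by
    have h2 : q ^ 2 * c = c * (-1) + S := by
      calc q ^ 2 * c = ((q ^ 2) • m) x₀ := by rw [Finsupp.smul_apply, smul_eq_mul]
        _ = (Ψ.tau K q i m) x₀ := by rw [heq]
        _ = ∑ x ∈ m.support, m x * (Ψ.tauFun K q i x x₀) := hco
        _ = m x₀ * (Ψ.tauFun K q i x₀ x₀)
            + ∑ x ∈ m.support.erase x₀, m x * (Ψ.tauFun K q i x x₀) :=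
              (Finset.add_sum_erase _ _ hx₀).symm
        _ = c * (-1) + S := by
            rw [hval x₀ hx₀, if_pos rfl]
            congr 1
            refine Finset.sum_congr rfl fun x hx => ?_
            rw [hval x (Finset.mem_of_mem_erase hx), if_neg (Finset.ne_of_mem_erase hx)]
    linear_combination h2
  have hQ : (q ^ 2 + 1 : K) = algebraMap (Polynomial F) K (Polynomial.X ^ 2 + 1) := by
    rw [map_add, map_pow, RatFunc.algebraMap_X, map_one]
  have hP0 : (Polynomial.X ^ 2 + 1 : Polynomial F) ≠ 0 := by
    intro h0
    have := congrArg (Polynomial.eval 0) h0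
    simp at this
  have hQ0 : (q ^ 2 + 1 : K) ≠ 0 := by rw [hQ]; exact RatFunc.algebraMap_ne_zero hP0
  have hdegQ : (q ^ 2 + 1 : K).intDegree = 2 := by
    rw [hQ, RatFunc.intDegree_polynomial,
      show (Polynomial.X ^ 2 + 1 : Polynomial ↥F) = Polynomial.X ^ 2 + Polynomial.C 1 by
        rw [map_one],
      Polynomial.natDegree_X_pow_add_C]
    norm_num
  have hL : RatFunc.intDegree ((q ^ 2 + 1) * c) = 2 + d := by
    rw [RatFunc.intDegree_mul hQ0 hc, hdegQ]
  have hR := intDegree_sum_le' (m.support.erase x₀)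
      (fun x => m x * (if i ∈ Ψ.I x then 0 else q * algebraMap F K (Ψ.mu x₀ x))) (1 + d) ?_
  · rcases hR with h0 | hle
    · rw [← hS_def] at h0
      exact mul_ne_zero hQ0 hc (hkey.trans h0)
    · rw [← hS_def] at hle
      rw [← hkey, hL] at hle
      omega
  · intro x hx hfx
    beta_reduce at hfx ⊢
    by_cases hIx : i ∈ Ψ.I x
    · rw [if_pos hIx, mul_zero] at hfx; exact absurd rfl hfx
    · rw [if_neg hIx] at hfx ⊢
      have hmx : m x ≠ 0 := Finsupp.mem_support_iff.1 (Finset.mem_of_mem_erase hx)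
      have hmu : algebraMap F K (Ψ.mu x₀ x) ≠ 0 := by
        intro h0
        rw [h0, mul_zero, mul_zero] at hfx
        exact hfx rfl
      have hq0 : (q : K) ≠ 0 := by
        rw [hq]; exact RatFunc.X_ne_zero
      rw [RatFunc.intDegree_mul hmx (mul_ne_zero hq0 hmu),
        RatFunc.intDegree_mul hq0 hmu, hq, RatFunc.intDegree_X,
        show algebraMap F K (Ψ.mu x₀ x) = RatFunc.C (Ψ.mu x₀ x) from rfl,
        RatFunc.intDegree_C]
      have := hmax x (Finset.mem_of_mem_erase hx)
      omega


end
end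

section
/- Suppose n(s,t) < ∞ for all s, t ∈ S, Γ is a finite W-digraph, Ψ is a W-graph over a subfield F of ℂ, and M(Γ)^F is isomorphic to M(Ψ) as H^F-modules. Then every connected component of Γ contains exactly one source and exactly one sink. -/
open scoped Classical

set_option synthInstance.maxHeartbeats 1000000
set_option maxHeartbeats 1000000

open scoped Classical
noncomputable section
open Finsupp

namespace WDUniq

variable {B V K : Type*} [Field K]

lemma lsum_span_apply [Fintype V] (g : V → (V →₀ K)) (m : V →₀ K) :
    Finsupp.lsum K (fun v => LinearMap.toSpanSingleton K (V →₀ K) (g v)) m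
      = ∑ v : V, m v • g v := by
  classical
  rw [Finsupp.lsum_apply]
  rw [Finsupp.sum_fintype]
  · simp [LinearMap.toSpanSingleton_apply]
  · intro v; simp

lemma lsum_span_coord [Fintype V] (g : V → (V →₀ K)) (m : V →₀ K) (w : V) :
    (Finsupp.lsum K (fun v => LinearMap.toSpanSingleton K (V →₀ K) (g v)) m) w
      = ∑ v : V, m v * g v w := by
  rw [lsum_span_apply]
  rw [Finset.sum_apply']
  simp

namespace G

variable (Γ : WDigraphData B V) (q : K)

lemma tau_single (i : B) (v : V) :
    Γ.tau K q i (Finsupp.single v 1) = Γ.tauFun K q i v := by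
  rw [WDigraphData.tau, Finsupp.lsum_single, LinearMap.toSpanSingleton_apply_one]

lemma tau_apply [Fintype V] (i : B) (m : V →₀ K) (w : V) :
    Γ.tau K q i m w = ∑ v : V, m v * Γ.tauFun K q i v w := by
  rw [WDigraphData.tau, lsum_span_coord]

lemma head_mate_false {i : B} {a : V} (h : Γ.head i a = false) :
    Γ.head i (Γ.mate i a) = true := by
  rw [Γ.head_mate, h]; rfl

lemma head_mate_true {i : B} {a : V} (h : Γ.head i a = true) :
    Γ.head i (Γ.mate i a) = false := by
  rw [Γ.head_mate, h]; rfl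

/-- coordinates of `tauFun i v` vanish off `{v, mate v}`. -/
lemma tauFun_coord_ne {i : B} {v w : V} (h1 : v ≠ w) (h2 : Γ.mate i v ≠ w) :
    Γ.tauFun K q i v w = 0 := by
  rw [WDigraphData.tauFun]
  split <;> split <;>
    simp [Finsupp.single_apply, h1, h2]

/-- coordinate of `tau i m` at the tail of an edge. -/
lemma tau_coord_tail [Fintype V] {i : B} {a : V} (ha : Γ.head i a = false)
    (m : V →₀ K) :
    Γ.tau K q i m a =
      (if Γ.dash i a then q * m a + (q ^ 2 - q) * m (Γ.mate i a)
        else q ^ 2 * m (Γ.mate i a)) := by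
  classical
  set b := Γ.mate i a with hb
  have hba : Γ.mate i b = a := Γ.mate_mate i a
  have hne : a ≠ b := (Γ.mate_ne i a).symm
  have hdb : Γ.dash i b = Γ.dash i a := Γ.dash_mate i a
  have hhb : Γ.head i b = true := head_mate_false Γ ha
  rw [tau_apply]
  have hsub : ({a, b} : Finset V) ⊆ Finset.univ := Finset.subset_univ _
  rw [← Finset.sum_subset hsub]
  · rw [Finset.sum_pair hne]
    have h1 : Γ.tauFun K q i a a = (if Γ.dash i a then q else 0) := by
      rw [WDigraphData.tauFun, ha]
      simp only [Bool.false_eq_true, if_false]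
      have hne' : b ≠ a := hne.symm
      split <;> simp [Finsupp.single_apply, hne, hne', Γ.mate_ne i a]
    have h2 : Γ.tauFun K q i b a = (if Γ.dash i a then q ^ 2 - q else q ^ 2) := by
      rw [WDigraphData.tauFun, hhb]
      simp only [if_true]
      rw [hdb]
      split <;> simp [Finsupp.single_apply, hba, hne.symm]
    rw [h1, h2]
    split <;> ring
  · intro v _ hv
    simp only [Finset.mem_insert, Finset.mem_singleton] at hv
    push_neg at hv
    have : Γ.mate i v ≠ a := by
      intro h
      apply hv.2
      show v = Γ.mate i a
      rw [← h, Γ.mate_mate]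
    rw [tauFun_coord_ne Γ q (by tauto) this, mul_zero]

/-- the key pairing identity: summing `tauFun` over an edge. -/
lemma tauFun_pair (i : B) (v : V) :
    Γ.tauFun K q i v + Γ.tauFun K q i (Γ.mate i v)
      = q ^ 2 • Finsupp.single v 1 + q ^ 2 • Finsupp.single (Γ.mate i v) 1 := by
  classical
  -- first the case where `v` is the tail
  have key : ∀ a : V, Γ.head i a = false →
      Γ.tauFun K q i a + Γ.tauFun K q i (Γ.mate i a)
        = q ^ 2 • Finsupp.single a 1 + q ^ 2 • Finsupp.single (Γ.mate i a) 1 := by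
    intro a ha
    have hhb : Γ.head i (Γ.mate i a) = true := head_mate_false Γ ha
    have hba : Γ.mate i (Γ.mate i a) = a := Γ.mate_mate i a
    have hdb : Γ.dash i (Γ.mate i a) = Γ.dash i a := Γ.dash_mate i a
    rw [WDigraphData.tauFun, WDigraphData.tauFun, ha, hhb, hdb, hba]
    simp only [Bool.false_eq_true, if_false, if_true]
    cases hd : Γ.dash i a <;> simp only [Bool.false_eq_true, if_false, if_true]
    · ext w
      simp only [Finsupp.add_apply, Finsupp.smul_apply, smul_eq_mul]
      ring
    · ext w
      simp only [Finsupp.add_apply, Finsupp.smul_apply, smul_eq_mul]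
      ring
  cases hh : Γ.head i v
  · exact key v hh
  · have hhm : Γ.head i (Γ.mate i v) = false := head_mate_true Γ hh
    have := key (Γ.mate i v) hhm
    rw [Γ.mate_mate i v] at this
    rw [add_comm, this, add_comm]

end G

namespace P

variable {X F : Type*} [Field F] [Algebra F K] [Fintype X]
variable (Ψ : WGraphData B X F) (q : K)

lemma tau_single (i : B) (x : X) :
    Ψ.tau K q i (Finsupp.single x 1) = Ψ.tauFun K q i x := by
  rw [WGraphData.tau, Finsupp.lsum_single, LinearMap.toSpanSingleton_apply_one]

lemma inner_coord (i : B) (y x : X) :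
    (∑ z : X, if i ∈ Ψ.I z then algebraMap F K (Ψ.mu z y) • Finsupp.single z (1 : K) else 0) x
      = (if i ∈ Ψ.I x then algebraMap F K (Ψ.mu x y) else 0) := by
  classical
  rw [Finset.sum_apply']
  rw [Finset.sum_eq_single_of_mem x (Finset.mem_univ x)]
  · split <;> simp [Finsupp.single_apply, Algebra.smul_def]
  · intro z _ hz
    split <;> simp [Finsupp.single_apply, hz]

lemma tauFun_coord (i : B) (y x : X) :
    Ψ.tauFun K q i y x
      = (if i ∈ Ψ.I y then (if y = x then -1 else 0)
          else (q ^ 2 * (if y = x then 1 else 0)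
            + q * (if i ∈ Ψ.I x then algebraMap F K (Ψ.mu x y) else 0))) := by
  classical
  rw [WGraphData.tauFun]
  split
  · rw [Finsupp.neg_apply]
    rw [Finsupp.single_apply]
    split <;> simp
  · rw [Finsupp.add_apply, Finsupp.smul_apply, Finsupp.smul_apply, inner_coord]
    simp [Finsupp.single_apply, mul_comm]

lemma tau_apply (i : B) (m : X →₀ K) (x : X) :
    Ψ.tau K q i m x = ∑ y : X, m y * Ψ.tauFun K q i y x := by
  rw [WGraphData.tau, lsum_span_coord]

/-- coordinate of `tau i m` at `x` with `i ∈ I x`. -/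
lemma tau_coord_mem {i : B} {x : X} (hx : i ∈ Ψ.I x) (m : X →₀ K) :
    Ψ.tau K q i m x
      = -(m x) + q * ∑ y : X,
          (if i ∈ Ψ.I y then 0 else algebraMap F K (Ψ.mu x y) * m y) := by
  classical
  rw [tau_apply]
  have : ∀ y : X, m y * Ψ.tauFun K q i y x
      = (if y = x then -(m x) else 0)
        + q * (if i ∈ Ψ.I y then 0 else algebraMap F K (Ψ.mu x y) * m y) := by
    intro y
    rw [tauFun_coord]
    by_cases hy : i ∈ Ψ.I y
    · simp only [hy, if_true]
      split
      · next h => subst h; simp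
      · simp
    · have hyx : y ≠ x := by rintro rfl; exact hy hx
      simp only [hy, if_false, hyx, hx, if_true, if_false]
      ring
  rw [Finset.sum_congr rfl fun y _ => this y]
  rw [Finset.sum_add_distrib, Finset.sum_ite_eq' Finset.univ x]
  simp [Finset.mul_sum]

/-- coordinate of `tau i m` at `x` with `i ∉ I x`. -/
lemma tau_coord_not_mem {i : B} {x : X} (hx : i ∉ Ψ.I x) (m : X →₀ K) :
    Ψ.tau K q i m x = q ^ 2 * m x := by
  classical
  rw [tau_apply]
  have : ∀ y : X, m y * Ψ.tauFun K q i y x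
      = (if y = x then q ^ 2 * m x else 0) := by
    intro y
    rw [tauFun_coord]
    by_cases hy : i ∈ Ψ.I y
    · have hyx : y ≠ x := by rintro rfl; exact hx hy
      simp [hy, hyx]
    · simp only [hy, if_false, hx, if_false]
      split
      · next h => subst h; ring
      · simp
  rw [Finset.sum_congr rfl fun y _ => this y]
  rw [Finset.sum_ite_eq' Finset.univ x]
  simp

end P

end WDUniq

end

open scoped Classical
noncomputable section
open Finsupp Polynomial

namespace WDUniq

variable {F : Type*} [Field F]

lemma poly_ne_zero_of_eval {p : Polynomial F} {t : F} (h : p.eval t ≠ 0) : p ≠ 0 := by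
  intro h0; rw [h0] at h; simp at h

lemma charZero_ratfunc [CharZero F] : CharZero (RatFunc F) := by
  constructor
  intro a b h
  have h2 : algebraMap (Polynomial F) (RatFunc F) ((a : Polynomial F))
      = algebraMap (Polynomial F) (RatFunc F) ((b : Polynomial F)) := by
    rw [map_natCast, map_natCast]
    exact_mod_cast h
  have := RatFunc.algebraMap_injective F h2
  exact_mod_cast this

lemma alg_ne_zero {p : Polynomial F} (hp : p ≠ 0) :
    algebraMap (Polynomial F) (RatFunc F) p ≠ 0 := by
  intro h
  apply hp
  apply RatFunc.algebraMap_injective F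
  rw [h, map_zero]

section Psi

variable {B X : Type*} [Fintype X] (Ψ : WGraphData B X F)

/-- The key "valuation" lemma: an `ind`-eigenvector of `M(Ψ)` vanishing on all
coordinates `x` with `I x = ∅` is zero. -/
lemma psi_ind_vanish (m : X →₀ RatFunc F)
    (hm : ∀ i, Ψ.tau (RatFunc F) RatFunc.X i m = (RatFunc.X ^ 2 : RatFunc F) • m)
    (h0 : ∀ x, Ψ.I x = ∅ → m x = 0) : m = 0 := by
  classical
  set K := RatFunc F
  set alg := algebraMap (Polynomial F) K with halg
  -- the coordinate equations
  have eqn : ∀ (x : X) (i : B), i ∈ Ψ.I x →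
      ((RatFunc.X : RatFunc F) ^ 2 + 1) * m x
        = RatFunc.X * ∑ y : X, (if i ∈ Ψ.I y then 0 else algebraMap F K (Ψ.mu x y) * m y) := by
    intro x i hi
    have h1 := P.tau_coord_mem Ψ RatFunc.X hi m
    rw [hm i] at h1
    rw [Finsupp.smul_apply, smul_eq_mul] at h1
    linear_combination h1
  -- clear denominators
  set d : Polynomial F := ∏ x : X, (m x).denom with hd
  have hdx : ∀ x : X, (m x).denom ∣ d := fun x => Finset.dvd_prod_of_mem _ (Finset.mem_univ x)
  have hdne : d ≠ 0 := by
    rw [hd]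
    exact Finset.prod_ne_zero_iff.2 fun x _ => RatFunc.denom_ne_zero (m x)
  have hp : ∀ x : X, ∃ p : Polynomial F, alg p = m x * alg d := by
    intro x
    obtain ⟨r, hr⟩ := hdx x
    refine ⟨(m x).num * r, ?_⟩
    rw [hr, map_mul, map_mul]
    have h1 : m x * alg (m x).denom = alg (m x).num := by
      nth_rewrite 1 [← RatFunc.num_div_denom (m x)]
      rw [div_mul_cancel₀]
      exact alg_ne_zero (RatFunc.denom_ne_zero (m x))
    rw [← mul_assoc, h1]
  choose p hpmap using hp
  -- polynomial equations
  have peqn : ∀ (x : X) (i : B), i ∈ Ψ.I x →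
      (Polynomial.X ^ 2 + 1) * p x
        = Polynomial.X * ∑ y : X, (if i ∈ Ψ.I y then 0 else Polynomial.C (Ψ.mu x y) * p y) := by
    intro x i hi
    apply RatFunc.algebraMap_injective F
    rw [map_mul, map_mul, map_add, map_pow, map_one, map_sum]
    rw [hpmap x, RatFunc.algebraMap_X]
    have : ∀ y : X, alg (if i ∈ Ψ.I y then 0 else Polynomial.C (Ψ.mu x y) * p y)
        = (if i ∈ Ψ.I y then 0 else algebraMap F K (Ψ.mu x y) * m y) * alg d := by
      intro y
      split
      · simp
      · rw [map_mul, hpmap y, RatFunc.algebraMap_C, RatFunc.algebraMap_eq_C, mul_assoc]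
    rw [Finset.sum_congr rfl fun y _ => this y, ← Finset.sum_mul]
    rw [← mul_assoc, ← mul_assoc]
    rw [eqn x i hi]
  -- p x = 0 for sources of Ψ
  have pzero : ∀ x : X, Ψ.I x = ∅ → p x = 0 := by
    intro x hx
    apply RatFunc.algebraMap_injective F
    rw [hpmap x, h0 x hx, zero_mul, map_zero]
  -- induction: X^n divides every p x
  have key : ∀ n : ℕ, ∀ x : X, Polynomial.X ^ n ∣ p x := by
    intro n
    induction n with
    | zero => intro x; simp
    | succ n ih =>
      choose qq hqq using ih
      intro x
      by_cases hx : Ψ.I x = ∅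
      · rw [pzero x hx]; exact dvd_zero _
      · obtain ⟨i, hi⟩ := Set.nonempty_iff_ne_empty.2 hx
        have h1 := peqn x i hi
        rw [hqq x] at h1
        have h2 : ∀ y : X, (if i ∈ Ψ.I y then 0 else Polynomial.C (Ψ.mu x y) * p y)
            = Polynomial.X ^ n * (if i ∈ Ψ.I y then 0 else Polynomial.C (Ψ.mu x y) * qq y) := by
          intro y
          split
          · simp
          · rw [hqq y]; ring
        rw [Finset.sum_congr rfl fun y _ => h2 y, ← Finset.mul_sum] at h1
        have h3 : (Polynomial.X ^ 2 + 1) * qq x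
            = Polynomial.X * ∑ y : X, (if i ∈ Ψ.I y then 0 else Polynomial.C (Ψ.mu x y) * qq y) := by
          apply mul_left_cancel₀ (pow_ne_zero n (Polynomial.X_ne_zero (R := F)))
          rw [show Polynomial.X ^ n * ((Polynomial.X ^ 2 + 1) * qq x)
              = (Polynomial.X ^ 2 + 1) * (Polynomial.X ^ n * qq x) by ring, h1]
          ring
        have h4 : (qq x).eval 0 = 0 := by
          have := congrArg (Polynomial.eval (0 : F)) h3
          simp at this
          exact this
        have h5 : Polynomial.X ∣ qq x := by
          rw [Polynomial.X_dvd_iff, Polynomial.coeff_zero_eq_eval_zero]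
          exact h4
        obtain ⟨r, hr⟩ := h5
        rw [hqq x, hr]
        exact ⟨r, by ring⟩
  have pz : ∀ x : X, p x = 0 := by
    intro x
    by_contra hne
    have h1 := Polynomial.natDegree_le_of_dvd (key ((p x).natDegree + 1) x) hne
    rw [Polynomial.natDegree_X_pow] at h1
    omega
  ext x
  have h1 : m x * alg d = 0 := by rw [← hpmap x, pz x, map_zero]
  have h2 : m x = 0 := by
    rcases mul_eq_zero.1 h1 with h | h
    · exact h
    · exact absurd h (alg_ne_zero hdne)
  simp [h2]

end Psi

end WDUniq

end

open scoped Classical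
noncomputable section
open Finsupp

namespace WDUniq

variable {B V K : Type*} [Field K]
variable (Γ : WDigraphData B V)

local notation "mkc" => Γ.underlying.connectedComponentMk

lemma adj_mate (i : B) (v : V) : Γ.underlying.Adj v (Γ.mate i v) := ⟨i, rfl⟩

lemma comp_mate (i : B) (v : V) : mkc (Γ.mate i v) = mkc v :=
  (SimpleGraph.ConnectedComponent.sound (adj_mate Γ i v).reachable).symm

section Comb

variable (q : K)

/-- `tau` applied to a combination with mate-invariant coefficients. -/
lemma tau_comb [Fintype V] [CharZero K] (w : V → K)
    (hw : ∀ i v, w (Γ.mate i v) = w v) (i : B) :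
    Γ.tau K q i (∑ v : V, w v • Finsupp.single v 1)
      = q ^ 2 • ∑ v : V, w v • Finsupp.single v 1 := by
  classical
  have inv : Function.Involutive (Γ.mate i) := Γ.mate_mate i
  have reidx : ∀ f : V → (V →₀ K), (∑ v : V, f (Γ.mate i v)) = ∑ v : V, f v :=
    fun f => Equiv.sum_comp inv.toPerm f
  have hL : Γ.tau K q i (∑ v : V, w v • Finsupp.single v 1)
      = ∑ v : V, w v • Γ.tauFun K q i v := by
    rw [map_sum]
    refine Finset.sum_congr rfl fun v _ => ?_
    rw [map_smul, G.tau_single]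
  rw [hL, Finset.smul_sum]
  set Lh := ∑ v : V, w v • Γ.tauFun K q i v with hLh
  set Rh := ∑ v : V, q ^ 2 • (w v • Finsupp.single v (1 : K)) with hRh
  have double : Lh + Lh = Rh + Rh := by
    have h1 : Lh = ∑ v : V, w v • Γ.tauFun K q i (Γ.mate i v) := by
      rw [hLh, ← reidx fun v => w v • Γ.tauFun K q i v]
      refine Finset.sum_congr rfl fun v _ => ?_
      rw [hw i v]
    have h2 : Rh = ∑ v : V, q ^ 2 • (w v • Finsupp.single (Γ.mate i v) (1 : K)) := by
      rw [hRh, ← reidx fun v => q ^ 2 • (w v • Finsupp.single v (1 : K))]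
      refine Finset.sum_congr rfl fun v _ => ?_
      rw [hw i v]
    nth_rewrite 2 [h1]
    nth_rewrite 2 [h2]
    rw [← Finset.sum_add_distrib, ← Finset.sum_add_distrib]
    refine Finset.sum_congr rfl fun v _ => ?_
    simp only [← smul_add]
    rw [G.tauFun_pair]
    simp only [← smul_add]
    rw [smul_comm]
  have h2 : (2 : K) • Lh = (2 : K) • Rh := by
    rw [two_smul, two_smul, double]
  exact smul_right_injective _ (two_ne_zero) h2

lemma comb_coord [Fintype V] (w : V → K) (v₀ : V) :
    (∑ v : V, w v • Finsupp.single v (1 : K)) v₀ = w v₀ := by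
  classical
  rw [Finset.sum_apply']
  rw [Finset.sum_eq_single_of_mem v₀ (Finset.mem_univ v₀)]
  · simp
  · intro v _ hv
    simp [Finsupp.single_apply, hv]

end Comb

/-- zero-propagation along components. -/
lemma prop_zero_walk (val : V → K)
    (hval : ∀ (i : B) (v : V), val v = 0 ↔ val (Γ.mate i v) = 0) :
    ∀ {a b : V} (_ : Γ.underlying.Walk a b), val a = 0 → val b = 0 := by
  intro a b p
  induction p with
  | nil => exact fun h => h
  | cons hxy p ih =>
      intro h
      obtain ⟨i, rfl⟩ := hxy
      exact ih ((hval i _).1 h)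

lemma prop_zero (val : V → K)
    (hval : ∀ (i : B) (v : V), val v = 0 ↔ val (Γ.mate i v) = 0)
    {a b : V} (h : mkc a = mkc b) (ha : val a = 0) : val b = 0 := by
  have hr : Γ.underlying.Reachable a b := (SimpleGraph.ConnectedComponent.eq).mp h
  obtain ⟨p⟩ := hr
  exact prop_zero_walk Γ val hval p ha

section Graph

/-- chains from reflexive-transitive closure. -/
lemma rtg_chain {v w : V} (h : Relation.ReflTransGen Γ.DirEdge v w) :
    ∃ (n : ℕ) (f : ℕ → V), f 0 = v ∧ f n = w ∧ ∀ k < n, Γ.DirEdge (f k) (f (k + 1)) := by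
  induction h with
  | refl => exact ⟨0, fun _ => v, rfl, rfl, fun k hk => absurd hk (by omega)⟩
  | @tail b c hab hbc ih =>
      obtain ⟨n, f, h0, hn, he⟩ := ih
      refine ⟨n + 1, fun k => if k ≤ n then f k else c, by simp [h0], by simp, ?_⟩
      intro k hk
      by_cases hkn : k < n
      · have h1 : k ≤ n := by omega
        have h2 : k + 1 ≤ n := by omega
        simp only [h1, h2, if_true]
        exact he k hkn
      · have hk' : k = n := by omega
        subst hk'
        simp only [le_refl, if_true, if_neg (by omega : ¬ k + 1 ≤ k)]
        rw [hn]
        exact hbc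

lemma no_return (hacyc : ∀ c, Γ.AcyclicComponent c) {v w : V}
    (hvw : Γ.DirEdge w v) (h : Relation.ReflTransGen Γ.DirEdge v w) : False := by
  obtain ⟨n, f, h0, hn, he⟩ := rtg_chain Γ h
  apply hacyc (mkc w)
  refine ⟨n + 1, fun k => if k = 0 then w else f (k - 1), by omega, ?_, ?_, by simp⟩
  · simp only [if_neg (by omega : ¬ n + 1 = 0), if_pos rfl]
    simpa using hn
  · intro k hk
    by_cases hk0 : k = 0
    · subst hk0
      simp only [if_pos rfl, if_neg (by omega : ¬ (0:ℕ) + 1 = 0)]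
      simpa [h0] using hvw
    · simp only [if_neg hk0, if_neg (by omega : ¬ k + 1 = 0)]
      have h1 : k - 1 < n := by omega
      have h2 : k - 1 + 1 = k := by omega
      have := he (k - 1) h1
      rwa [h2] at this

lemma in_univ_iff (v : V) : Γ.In v = Set.univ ↔ ∀ i, Γ.head i v = true := by
  constructor
  · intro h i
    have : i ∈ Γ.In v := by rw [h]; trivial
    exact this
  · intro h
    ext i
    simp [WDigraphData.In, h i]

lemma in_empty_iff (v : V) : Γ.In v = ∅ ↔ ∀ i, Γ.head i v = false := by
  constructor
  · intro h i
    by_contra hc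
    have : i ∈ Γ.In v := by
      simp only [WDigraphData.In, Set.mem_setOf_eq]
      revert hc
      cases Γ.head i v <;> simp
    rw [h] at this
    exact this
  · intro h
    ext i
    simp [WDigraphData.In, h i]

lemma exists_sink [Finite V] (c : Γ.underlying.ConnectedComponent)
    (hacyc : Γ.AcyclicComponent c) :
    ∃ v : V, Γ.In v = Set.univ ∧ mkc v = c := by
  classical
  by_contra hno
  push_neg at hno
  obtain ⟨v₀, hv₀⟩ := c.exists_rep
  have step : ∀ v : {v : V // mkc v = c}, ∃ w : {v : V // mkc v = c}, Γ.DirEdge v.1 w.1 := by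
    rintro ⟨v, hv⟩
    have h1 : ¬ (Γ.In v = Set.univ) := fun h => hno v h hv
    rw [in_univ_iff] at h1
    push_neg at h1
    obtain ⟨i, hi⟩ := h1
    have hi' : Γ.head i v = false := by revert hi; cases Γ.head i v <;> simp
    exact ⟨⟨Γ.mate i v, by rw [comp_mate]; exact hv⟩, ⟨i, hi', rfl⟩⟩
  choose nxt hnxt using step
  let g : ℕ → {v : V // mkc v = c} := fun k => nxt^[k] ⟨v₀, hv₀⟩
  have hgs : ∀ k, g (k + 1) = nxt (g k) := by
    intro k
    simp only [g, Function.iterate_succ_apply']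
  obtain ⟨a, b, hab, heq⟩ := Finite.exists_ne_map_eq_of_infinite g
  have main : ∀ a b : ℕ, a < b → g a = g b → False := by
    intro a b hlt heq'
    apply hacyc
    refine ⟨b - a, fun k => (g (a + k)).1, by omega, ?_, ?_, ?_⟩
    · show (g (a + (b - a))).1 = (g (a + 0)).1
      rw [Nat.add_sub_cancel' hlt.le, Nat.add_zero, heq']
    · intro k hk
      show Γ.DirEdge (g (a + k)).1 (g (a + (k + 1))).1
      rw [show a + (k + 1) = (a + k) + 1 by omega, hgs]
      exact hnxt (g (a + k))
    · show Γ.underlying.connectedComponentMk (g (a + 0)).1 = c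
      rw [Nat.add_zero]
      exact (g a).2
  rcases hab.lt_or_gt with hlt | hlt
  · exact main a b hlt heq
  · exact main b a hlt heq.symm

lemma exists_source [Finite V] (c : Γ.underlying.ConnectedComponent)
    (hacyc : Γ.AcyclicComponent c) :
    ∃ v : V, Γ.In v = ∅ ∧ mkc v = c := by
  classical
  by_contra hno
  push_neg at hno
  obtain ⟨v₀, hv₀⟩ := c.exists_rep
  have step : ∀ v : {v : V // mkc v = c}, ∃ w : {v : V // mkc v = c}, Γ.DirEdge w.1 v.1 := by
    rintro ⟨v, hv⟩
    have h1 : ¬ (Γ.In v = ∅) := fun h => hno v h hv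
    rw [in_empty_iff] at h1
    push_neg at h1
    obtain ⟨i, hi⟩ := h1
    have hi' : Γ.head i v = true := by revert hi; cases Γ.head i v <;> simp
    refine ⟨⟨Γ.mate i v, by rw [comp_mate]; exact hv⟩, ⟨i, ?_, Γ.mate_mate i v⟩⟩
    rw [Γ.head_mate, hi']
    rfl
  choose prv hprv using step
  let g : ℕ → {v : V // mkc v = c} := fun k => prv^[k] ⟨v₀, hv₀⟩
  have hgs : ∀ k, g (k + 1) = prv (g k) := by
    intro k
    simp only [g, Function.iterate_succ_apply']
  obtain ⟨a, b, hab, heq⟩ := Finite.exists_ne_map_eq_of_infinite g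
  -- wlog a < b
  have main : ∀ a b : ℕ, a < b → g a = g b → False := by
    intro a b hlt heq'
    apply hacyc
    refine ⟨b - a, fun k => (g (b - k)).1, by omega, ?_, ?_, ?_⟩
    · show (g (b - (b - a))).1 = (g (b - 0)).1
      rw [Nat.sub_sub_self hlt.le, Nat.sub_zero, heq']
    · intro k hk
      show Γ.DirEdge (g (b - k)).1 (g (b - (k + 1))).1
      have h1 : b - k = b - (k + 1) + 1 := by omega
      rw [h1, hgs]
      exact hprv (g (b - (k + 1)))
    · show Γ.underlying.connectedComponentMk (g (b - 0)).1 = c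
      rw [Nat.sub_zero]
      exact (g b).2
  rcases hab.lt_or_gt with hlt | hlt
  · exact main a b hlt heq
  · exact main b a hlt heq.symm

end Graph

end WDUniq

end

set_option synthInstance.maxHeartbeats 1000000
set_option maxHeartbeats 1000000

open scoped Classical
noncomputable section
open Finsupp

namespace WDUniq

variable {F : Type*} [Field F] {B V : Type*} (Γ : WDigraphData B V) [Fintype V]

local notation "K" => RatFunc F
local notation "uX" => (RatFunc.X : RatFunc F)
local notation "alg" => algebraMap (Polynomial F) (RatFunc F)

lemma pXp1_ne : (Polynomial.X + 1 : Polynomial F) ≠ 0 :=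
  poly_ne_zero_of_eval (t := 0) (by simp)

lemma pXm1_ne : (Polynomial.X - 1 : Polynomial F) ≠ 0 :=
  poly_ne_zero_of_eval (t := 0) (by simp)

lemma uX_eq : uX = alg Polynomial.X := (RatFunc.algebraMap_X).symm

lemma uX_ne : uX ≠ 0 := by
  rw [uX_eq]
  exact alg_ne_zero Polynomial.X_ne_zero

lemma uXp1_ne : uX + 1 ≠ 0 := by
  rw [uX_eq, show (1 : RatFunc F) = alg 1 by rw [map_one], ← map_add]
  exact alg_ne_zero pXp1_ne

lemma uXm1_ne : uX - 1 ≠ 0 := by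
  rw [uX_eq, show (1 : RatFunc F) = alg 1 by rw [map_one], ← map_sub]
  exact alg_ne_zero pXm1_ne

section Func

variable (f : (V →₀ RatFunc F) →ₗ[RatFunc F] RatFunc F)

/-- edge relation for an `ind`-functional. -/
lemma func_edge
    (hf : ∀ (i : B) (m : V →₀ RatFunc F),
      f (Γ.tau (RatFunc F) RatFunc.X i m) = RatFunc.X ^ 2 * f m)
    {i : B} {a : V} (ha : Γ.head i a = false) :
    (if Γ.dash i a then (uX + 1) else 1) * f (Finsupp.single (Γ.mate i a) 1)
      = (if Γ.dash i a then uX * (uX - 1) else uX ^ 2) * f (Finsupp.single a 1) := by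
  have h := hf i (Finsupp.single a 1)
  rw [G.tau_single, WDigraphData.tauFun, ha] at h
  simp only [Bool.false_eq_true, if_false] at h
  by_cases hd : Γ.dash i a = true
  · rw [hd] at h
    simp only [if_true] at h
    rw [map_add, map_smul, map_smul, smul_eq_mul, smul_eq_mul] at h
    simp only [hd, if_true]
    linear_combination h
  · have hd' : Γ.dash i a = false := by revert hd; cases Γ.dash i a <;> simp
    rw [hd'] at h
    simp only [Bool.false_eq_true, if_false] at h
    simp only [hd', Bool.false_eq_true, if_false]
    linear_combination h

lemma func_iff
    (hf : ∀ (i : B) (m : V →₀ RatFunc F),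
      f (Γ.tau (RatFunc F) RatFunc.X i m) = RatFunc.X ^ 2 * f m)
    (i : B) (v : V) :
    f (Finsupp.single v 1) = 0 ↔ f (Finsupp.single (Γ.mate i v) 1) = 0 := by
  have key : ∀ a : V, Γ.head i a = false →
      (f (Finsupp.single a 1) = 0 ↔ f (Finsupp.single (Γ.mate i a) 1) = 0) := by
    intro a ha
    have h := func_edge Γ f hf ha
    have hden : (if Γ.dash i a then (uX + 1) else (1 : RatFunc F)) ≠ 0 := by
      split
      · exact uXp1_ne
      · exact one_ne_zero
    have hnum : (if Γ.dash i a then uX * (uX - 1) else uX ^ 2) ≠ 0 := by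
      split
      · exact mul_ne_zero uX_ne uXm1_ne
      · exact pow_ne_zero 2 uX_ne
    constructor
    · intro h0
      rw [h0, mul_zero] at h
      rcases mul_eq_zero.1 h with h' | h'
      · exact absurd h' hden
      · exact h'
    · intro h0
      rw [h0, mul_zero] at h
      rcases mul_eq_zero.1 h.symm with h' | h'
      · exact absurd h' hnum
      · exact h'
  cases hh : Γ.head i v
  · exact key v hh
  · have h1 := key (Γ.mate i v) (G.head_mate_true Γ hh)
    rw [Γ.mate_mate] at h1
    exact h1.symm

/-- a cycle forces an `ind`-functional to vanish at the base point. -/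
lemma func_cycle_vanish
    (hf : ∀ (i : B) (m : V →₀ RatFunc F),
      f (Γ.tau (RatFunc F) RatFunc.X i m) = RatFunc.X ^ 2 * f m)
    {n : ℕ} {fc : ℕ → V} (hn : 0 < n) (hcyc : fc n = fc 0)
    (hedge : ∀ k < n, Γ.DirEdge (fc k) (fc (k + 1))) :
    f (Finsupp.single (fc 0) 1) = 0 := by
  classical
  have hP : ∀ k, k ≤ n → ∃ p q : Polynomial F, p ≠ 0 ∧ q ≠ 0 ∧
      q.natDegree + k ≤ p.natDegree ∧
      alg q * f (Finsupp.single (fc k) 1) = alg p * f (Finsupp.single (fc 0) 1) := by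
    intro k
    induction k with
    | zero =>
        intro _
        exact ⟨1, 1, one_ne_zero, one_ne_zero, by simp, by rw [map_one]⟩
    | succ k ih =>
        intro hk
        obtain ⟨p, q, hp, hq, hdeg, heq⟩ := ih (by omega)
        obtain ⟨i, hhead, hmate⟩ := hedge k (by omega)
        have hratio := func_edge Γ f hf hhead
        rw [hmate] at hratio
        set dp : Polynomial F := if Γ.dash i (fc k) then Polynomial.X + 1 else 1 with hdp
        set np : Polynomial F :=
          if Γ.dash i (fc k) then Polynomial.X * (Polynomial.X - 1) else Polynomial.X ^ 2 with hnp
        have hdpne : dp ≠ 0 := by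
          rw [hdp]; split
          · exact pXp1_ne
          · exact one_ne_zero
        have hnpne : np ≠ 0 := by
          rw [hnp]; split
          · exact mul_ne_zero Polynomial.X_ne_zero pXm1_ne
          · exact pow_ne_zero 2 Polynomial.X_ne_zero
        have halgdp : alg dp = (if Γ.dash i (fc k) then (uX + 1) else 1) := by
          rw [hdp]; split <;> simp [RatFunc.algebraMap_X]
        have halgnp : alg np = (if Γ.dash i (fc k) then uX * (uX - 1) else uX ^ 2) := by
          rw [hnp]; split <;> simp [RatFunc.algebraMap_X]
        have hdp1 : dp.natDegree ≤ 1 := by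
          rw [hdp]; split
          · rw [show (1 : Polynomial F) = Polynomial.C 1 from (Polynomial.C_1).symm,
              Polynomial.natDegree_X_add_C]
          · simp
        have hnp2 : np.natDegree = 2 := by
          rw [hnp]; split
          · rw [Polynomial.natDegree_mul Polynomial.X_ne_zero pXm1_ne,
              Polynomial.natDegree_X,
              show (1 : Polynomial F) = Polynomial.C 1 from (Polynomial.C_1).symm,
              Polynomial.natDegree_X_sub_C]
          · exact Polynomial.natDegree_X_pow 2
        refine ⟨p * np, q * dp, mul_ne_zero hp hnpne, mul_ne_zero hq hdpne, ?_, ?_⟩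
        · rw [Polynomial.natDegree_mul hq hdpne, Polynomial.natDegree_mul hp hnpne]
          omega
        · calc alg (q * dp) * f (Finsupp.single (fc (k + 1)) 1)
              = alg q * ((if Γ.dash i (fc k) then (uX + 1) else 1)
                  * f (Finsupp.single (fc (k + 1)) 1)) := by
                rw [map_mul, halgdp]; ring
            _ = alg q * ((if Γ.dash i (fc k) then uX * (uX - 1) else uX ^ 2)
                  * f (Finsupp.single (fc k) 1)) := by rw [hratio]
            _ = alg np * (alg q * f (Finsupp.single (fc k) 1)) := by rw [halgnp]; ring
            _ = alg np * (alg p * f (Finsupp.single (fc 0) 1)) := by rw [heq]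
            _ = alg (p * np) * f (Finsupp.single (fc 0) 1) := by rw [map_mul]; ring
  obtain ⟨p, q, hp, hq, hdeg, heq⟩ := hP n le_rfl
  rw [hcyc] at heq
  have hqp : q ≠ p := by
    intro h
    rw [h] at hdeg
    omega
  have hne : alg q - alg p ≠ 0 := by
    rw [sub_ne_zero]
    intro h
    exact hqp (RatFunc.algebraMap_injective F h)
  have h0 : (alg q - alg p) * f (Finsupp.single (fc 0) 1) = 0 := by
    rw [sub_mul, heq, sub_self]
  rcases mul_eq_zero.1 h0 with h | h
  · exact absurd h hne
  · exact h

end Func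

section Vec

variable (m : V →₀ RatFunc F)

/-- edge relation for a `sgn`-eigenvector. -/
lemma vec_edge (hm : ∀ i : B, Γ.tau (RatFunc F) RatFunc.X i m = -m)
    {i : B} {a : V} (ha : Γ.head i a = false) :
    (if Γ.dash i a then (uX + 1) else 1) * m a
      = -(if Γ.dash i a then uX * (uX - 1) else uX ^ 2) * m (Γ.mate i a) := by
  have h := congrArg (fun z : V →₀ RatFunc F => z a) (hm i)
  rw [G.tau_coord_tail Γ RatFunc.X ha, Finsupp.neg_apply] at h
  by_cases hd : Γ.dash i a = true
  · rw [hd] at h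
    simp only [if_true] at h
    simp only [hd, if_true]
    linear_combination h
  · have hd' : Γ.dash i a = false := by revert hd; cases Γ.dash i a <;> simp
    rw [hd'] at h
    simp only [Bool.false_eq_true, if_false] at h
    simp only [hd', Bool.false_eq_true, if_false]
    linear_combination h

lemma vec_iff (hm : ∀ i : B, Γ.tau (RatFunc F) RatFunc.X i m = -m)
    (i : B) (v : V) : m v = 0 ↔ m (Γ.mate i v) = 0 := by
  have key : ∀ a : V, Γ.head i a = false → (m a = 0 ↔ m (Γ.mate i a) = 0) := by
    intro a ha
    have h := vec_edge Γ m hm ha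
    have hden : (if Γ.dash i a then (uX + 1) else (1 : RatFunc F)) ≠ 0 := by
      split
      · exact uXp1_ne
      · exact one_ne_zero
    have hnum : -(if Γ.dash i a then uX * (uX - 1) else uX ^ 2) ≠ (0 : RatFunc F) := by
      rw [neg_ne_zero]
      split
      · exact mul_ne_zero uX_ne uXm1_ne
      · exact pow_ne_zero 2 uX_ne
    constructor
    · intro h0
      rw [h0, mul_zero] at h
      rcases mul_eq_zero.1 h.symm with h' | h'
      · exact absurd h' hnum
      · exact h'
    · intro h0
      rw [h0, mul_zero] at h
      rcases mul_eq_zero.1 h with h' | h'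
      · exact absurd h' hden
      · exact h'
  cases hh : Γ.head i v
  · exact key v hh
  · have h1 := key (Γ.mate i v) (G.head_mate_true Γ hh)
    rw [Γ.mate_mate] at h1
    exact h1.symm

end Vec

end WDUniq

end

set_option synthInstance.maxHeartbeats 1000000
set_option maxHeartbeats 1000000

open scoped Classical
noncomputable section
open Finsupp

namespace WDUniq

variable {F : Type*} [Field F] {B V X : Type*} [Fintype V] [Fintype X]
variable (Γ : WDigraphData B V) (Ψ : WGraphData B X F)

local notation "K" => RatFunc F
local notation "uu" => (RatFunc.X : RatFunc F)
local notation "mkc" => Γ.underlying.connectedComponentMk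
local notation "Comp" => Γ.underlying.ConnectedComponent

/-- the combination map `(Comp → K) →ₗ (V →₀ K)`. -/
def comb : (Comp → RatFunc F) →ₗ[RatFunc F] (V →₀ RatFunc F) :=
  ∑ v : V, (LinearMap.proj (mkc v)).smulRight (Finsupp.single v 1)

lemma comb_apply (g : Comp → RatFunc F) :
    comb Γ g = ∑ v : V, g (mkc v) • Finsupp.single v 1 := by
  rw [comb, LinearMap.sum_apply]
  refine Finset.sum_congr rfl fun v _ => ?_
  rw [LinearMap.smulRight_apply, LinearMap.proj_apply]

/-- the coordinate sum functional `({x // P x} → K) →ₗ Dual`. -/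
def sumFunc {P : X → Prop} :
    ({x : X // P x} → RatFunc F) →ₗ[RatFunc F] ((X →₀ RatFunc F) →ₗ[RatFunc F] RatFunc F) :=
  ∑ xs : {x : X // P x}, (LinearMap.proj xs).smulRight (Finsupp.lapply xs.1)

lemma sumFunc_apply {P : X → Prop} (h : {x : X // P x} → RatFunc F) (m : X →₀ RatFunc F) :
    sumFunc (X := X) (F := F) (P := P) h m = ∑ xs : {x : X // P x}, h xs * m xs.1 := by
  rw [sumFunc, LinearMap.sum_apply, LinearMap.sum_apply]
  refine Finset.sum_congr rfl fun xs _ => ?_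
  rw [LinearMap.smulRight_apply, LinearMap.proj_apply, LinearMap.smul_apply,
    Finsupp.lapply_apply, smul_eq_mul]

lemma sumFunc_single {P : X → Prop} (h : {x : X // P x} → RatFunc F) (xs : {x : X // P x}) :
    sumFunc (X := X) (F := F) (P := P) h (Finsupp.single xs.1 1) = h xs := by
  rw [sumFunc_apply]
  rw [Finset.sum_eq_single_of_mem xs (Finset.mem_univ xs)]
  · simp
  · intro ys _ hys
    have : ¬ (xs.1 = ys.1) := fun hh => hys (Subtype.ext hh.symm)
    simp [Finsupp.single_apply, this]

/-- the combination map on the `Ψ` side. -/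
def combX {P : X → Prop} :
    ({x : X // P x} → RatFunc F) →ₗ[RatFunc F] (X →₀ RatFunc F) :=
  ∑ xs : {x : X // P x}, (LinearMap.proj xs).smulRight (Finsupp.single xs.1 1)

lemma combX_apply {P : X → Prop} (h : {x : X // P x} → RatFunc F) :
    combX (X := X) (F := F) (P := P) h = ∑ xs : {x : X // P x}, h xs • Finsupp.single xs.1 1 := by
  rw [combX, LinearMap.sum_apply]
  refine Finset.sum_congr rfl fun xs _ => ?_
  rw [LinearMap.smulRight_apply, LinearMap.proj_apply]

lemma combX_coord {P : X → Prop} (h : {x : X // P x} → RatFunc F) (xs : {x : X // P x}) :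
    combX (X := X) (F := F) (P := P) h xs.1 = h xs := by
  rw [combX_apply, Finset.sum_apply']
  rw [Finset.sum_eq_single_of_mem xs (Finset.mem_univ xs)]
  · simp
  · intro ys _ hys
    have : ¬ (ys.1 = xs.1) := fun hh => hys (Subtype.ext hh)
    simp [Finsupp.single_apply, this]

/-- the `ind`-eigen-property of the coordinate-sum functional on `∅`-vertices. -/
lemma sumFunc_eigen (h : {x : X // Ψ.I x = ∅} → RatFunc F) (i : B) (m : X →₀ RatFunc F) :
    sumFunc (P := fun x => Ψ.I x = ∅) h (Ψ.tau (RatFunc F) RatFunc.X i m)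
      = RatFunc.X ^ 2 * sumFunc (P := fun x => Ψ.I x = ∅) h m := by
  rw [sumFunc_apply, sumFunc_apply, Finset.mul_sum]
  refine Finset.sum_congr rfl fun xs _ => ?_
  have hx : i ∉ Ψ.I xs.1 := by rw [xs.2]; exact Set.notMem_empty i
  rw [P.tau_coord_not_mem Ψ RatFunc.X hx m]
  ring

section Legs

variable (e : (V →₀ RatFunc F) ≃ₗ[RatFunc F] (X →₀ RatFunc F))
variable [Fintype Γ.underlying.ConnectedComponent]

/-- Leg 1: `#components ≤ N_Ψ(∅)`. -/
lemma comps_le_nempty [CharZero F]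
    (hint : ∀ (i : B) (m : V →₀ RatFunc F),
      e (Γ.tau (RatFunc F) RatFunc.X i m) = Ψ.tau (RatFunc F) RatFunc.X i (e m)) :
    Fintype.card Comp ≤ Fintype.card {x : X // Ψ.I x = ∅} := by
  haveI : CharZero (RatFunc F) := charZero_ratfunc
  set Map1 : (Comp → RatFunc F) →ₗ[RatFunc F] ({x : X // Ψ.I x = ∅} → RatFunc F) :=
    (LinearMap.pi fun xs => Finsupp.lapply xs.1) ∘ₗ e.toLinearMap ∘ₗ comb Γ with hMap1
  have hinj : Function.Injective Map1 := by
    rw [← LinearMap.ker_eq_bot, LinearMap.ker_eq_bot']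
    intro g hg
    have hw : ∀ (i : B) (v : V), (fun v => g (mkc v)) (Γ.mate i v) = (fun v => g (mkc v)) v := by
      intro i v
      simp only
      rw [comp_mate]
    have hS1 : ∀ i : B, Γ.tau (RatFunc F) RatFunc.X i (comb Γ g)
        = (RatFunc.X ^ 2 : RatFunc F) • comb Γ g := by
      intro i
      rw [comb_apply]
      exact tau_comb Γ RatFunc.X (fun v => g (mkc v)) hw i
    have hS2 : ∀ i : B, Ψ.tau (RatFunc F) RatFunc.X i (e (comb Γ g))
        = (RatFunc.X ^ 2 : RatFunc F) • e (comb Γ g) := by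
      intro i
      rw [← hint, hS1, map_smul]
    have hcoord : ∀ x : X, Ψ.I x = ∅ → e (comb Γ g) x = 0 := by
      intro x hx
      have := congrFun hg ⟨x, hx⟩
      simpa [hMap1] using this
    have hzero : e (comb Γ g) = 0 := psi_ind_vanish Ψ (e (comb Γ g)) hS2 hcoord
    have hcomb : comb Γ g = 0 := by
      apply e.injective
      rw [hzero, map_zero]
    funext c
    obtain ⟨v, hv⟩ := c.exists_rep
    have h2 : (∑ v' : V, g (mkc v') • Finsupp.single v' (1 : RatFunc F)) v = 0 := by
      rw [← comb_apply, hcomb]; rfl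
    rw [comb_coord (fun v' => g (mkc v')) v] at h2
    show g c = 0
    rw [← hv]
    exact h2
  calc Fintype.card Comp
      = Module.finrank (RatFunc F) (Comp → RatFunc F) :=
        (Module.finrank_fintype_fun_eq_card _).symm
    _ ≤ Module.finrank (RatFunc F) ({x : X // Ψ.I x = ∅} → RatFunc F) :=
        LinearMap.finrank_le_finrank_of_injective hinj
    _ = Fintype.card {x : X // Ψ.I x = ∅} := Module.finrank_fintype_fun_eq_card _

/-- the pulled-back functional is an `ind`-functional on the `Γ` side. -/
lemma pulled_eigen
    (hint : ∀ (i : B) (m : V →₀ RatFunc F),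
      e (Γ.tau (RatFunc F) RatFunc.X i m) = Ψ.tau (RatFunc F) RatFunc.X i (e m))
    (h : {x : X // Ψ.I x = ∅} → RatFunc F) (i : B) (m : V →₀ RatFunc F) :
    (sumFunc (P := fun x => Ψ.I x = ∅) h ∘ₗ e.toLinearMap) (Γ.tau (RatFunc F) RatFunc.X i m)
      = RatFunc.X ^ 2 * (sumFunc (P := fun x => Ψ.I x = ∅) h ∘ₗ e.toLinearMap) m := by
  simp only [LinearMap.comp_apply, LinearEquiv.coe_coe]
  rw [hint, sumFunc_eigen]

/-- if the pulled-back functional vanishes on all basis vectors then `h = 0`. -/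
lemma pulled_zero (h : {x : X // Ψ.I x = ∅} → RatFunc F)
    (hv : ∀ v : V, (sumFunc (P := fun x => Ψ.I x = ∅) h ∘ₗ e.toLinearMap)
      (Finsupp.single v 1) = 0) : h = 0 := by
  have hL : sumFunc (P := fun x => Ψ.I x = ∅) h = 0 := by
    have hf0 : (sumFunc (P := fun x => Ψ.I x = ∅) h ∘ₗ e.toLinearMap) = 0 := by
      apply Finsupp.lhom_ext
      intro v b
      have : Finsupp.single v b = b • Finsupp.single v (1 : RatFunc F) := by
        rw [Finsupp.smul_single, smul_eq_mul, mul_one]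
      rw [this, map_smul, hv v, smul_zero]
      rfl
    have : ∀ m' : X →₀ RatFunc F, sumFunc (P := fun x => Ψ.I x = ∅) h m' = 0 := by
      intro m'
      have h1 : m' = e (e.symm m') := (e.apply_symm_apply m').symm
      rw [h1]
      have := congrFun (congrArg (fun (L : (V →₀ RatFunc F) →ₗ[RatFunc F] RatFunc F) => L.toFun) hf0) (e.symm m')
      simpa using this
    exact LinearMap.ext this
  funext xs
  have := congrFun (congrArg (fun (L : (X →₀ RatFunc F) →ₗ[RatFunc F] RatFunc F) => L.toFun)
    hL) (Finsupp.single xs.1 1)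
  rw [show ((sumFunc (P := fun x => Ψ.I x = ∅) h).toFun (Finsupp.single xs.1 1))
      = sumFunc (P := fun x => Ψ.I x = ∅) h (Finsupp.single xs.1 1) from rfl] at this
  rw [sumFunc_single] at this
  simpa using this

/-- Leg 2a: all components are acyclic. -/
lemma acyclic_all [CharZero F]
    (hint : ∀ (i : B) (m : V →₀ RatFunc F),
      e (Γ.tau (RatFunc F) RatFunc.X i m) = Ψ.tau (RatFunc F) RatFunc.X i (e m)) :
    ∀ c : Comp, Γ.AcyclicComponent c := by
  by_contra hc
  push_neg at hc
  obtain ⟨c₀, hc₀⟩ := hc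
  rw [WDigraphData.AcyclicComponent, not_not] at hc₀
  obtain ⟨n, fc, hn, hcyc, hedge, hmk⟩ := hc₀
  -- the restricted evaluation map
  set rep : Comp → V := fun c => c.exists_rep.choose with hrepdef
  have hrep : ∀ c, mkc (rep c) = c := fun c => c.exists_rep.choose_spec
  set Map2 : ({x : X // Ψ.I x = ∅} → RatFunc F) →ₗ[RatFunc F]
      ({c : Comp // c ≠ c₀} → RatFunc F) :=
    LinearMap.pi (fun cs => (LinearMap.applyₗ (Finsupp.single (rep cs.1) (1 : RatFunc F))) ∘ₗ
      ((LinearMap.lcomp (RatFunc F) (RatFunc F) e.toLinearMap) ∘ₗ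
        sumFunc (P := fun x => Ψ.I x = ∅))) with hMap2
  have hMap2val : ∀ h cs, Map2 h cs
      = (sumFunc (P := fun x => Ψ.I x = ∅) h ∘ₗ e.toLinearMap)
          (Finsupp.single (rep cs.1) 1) := by
    intro h cs
    rfl
  have hinj : Function.Injective Map2 := by
    rw [← LinearMap.ker_eq_bot, LinearMap.ker_eq_bot']
    intro h hh
    set f' := sumFunc (P := fun x => Ψ.I x = ∅) h ∘ₗ e.toLinearMap with hf'
    have heig : ∀ (i : B) (m : V →₀ RatFunc F),
        f' (Γ.tau (RatFunc F) RatFunc.X i m) = RatFunc.X ^ 2 * f' m :=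
      pulled_eigen Γ Ψ e hint h
    have hiff : ∀ (i : B) (v : V),
        (fun v => f' (Finsupp.single v 1)) v = 0
          ↔ (fun v => f' (Finsupp.single v 1)) (Γ.mate i v) = 0 := by
      intro i v
      exact func_iff Γ f' heig i v
    have hbase : f' (Finsupp.single (fc 0) 1) = 0 :=
      func_cycle_vanish Γ f' heig hn hcyc hedge
    have hzero : ∀ v : V, f' (Finsupp.single v 1) = 0 := by
      intro v
      by_cases hvc : mkc v = c₀
      · refine prop_zero Γ (fun v => f' (Finsupp.single v 1)) hiff ?_ hbase
        rw [hmk, hvc]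
      · have h1 : Map2 h ⟨mkc v, hvc⟩ = 0 := by rw [hh]; rfl
        rw [hMap2val] at h1
        refine prop_zero Γ (fun v => f' (Finsupp.single v 1)) hiff ?_ h1
        rw [hrep]
    exact pulled_zero Ψ e h hzero
  have hcard : Fintype.card {x : X // Ψ.I x = ∅} ≤ Fintype.card {c : Comp // c ≠ c₀} := by
    calc Fintype.card {x : X // Ψ.I x = ∅}
        = Module.finrank (RatFunc F) ({x : X // Ψ.I x = ∅} → RatFunc F) :=
          (Module.finrank_fintype_fun_eq_card _).symm
      _ ≤ Module.finrank (RatFunc F) ({c : Comp // c ≠ c₀} → RatFunc F) :=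
          LinearMap.finrank_le_finrank_of_injective hinj
      _ = Fintype.card {c : Comp // c ≠ c₀} := Module.finrank_fintype_fun_eq_card _
  have h1 := comps_le_nempty Γ Ψ e hint
  have h2 : Fintype.card {c : Comp // c ≠ c₀} = Fintype.card Comp - 1 := by
    rw [Fintype.card_subtype_compl, Fintype.card_subtype_eq]
  have h3 : 1 ≤ Fintype.card Comp := Fintype.card_pos_iff.2 ⟨c₀⟩
  omega

/-- Leg 2b: `N_Ψ(∅) ≤ #components`. -/
lemma nempty_le_comps
    (hint : ∀ (i : B) (m : V →₀ RatFunc F),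
      e (Γ.tau (RatFunc F) RatFunc.X i m) = Ψ.tau (RatFunc F) RatFunc.X i (e m)) :
    Fintype.card {x : X // Ψ.I x = ∅} ≤ Fintype.card Comp := by
  set rep : Comp → V := fun c => c.exists_rep.choose with hrepdef
  have hrep : ∀ c, mkc (rep c) = c := fun c => c.exists_rep.choose_spec
  set Map2 : ({x : X // Ψ.I x = ∅} → RatFunc F) →ₗ[RatFunc F] (Comp → RatFunc F) :=
    LinearMap.pi (fun c => (LinearMap.applyₗ (Finsupp.single (rep c) (1 : RatFunc F))) ∘ₗ
      ((LinearMap.lcomp (RatFunc F) (RatFunc F) e.toLinearMap) ∘ₗ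
        sumFunc (P := fun x => Ψ.I x = ∅))) with hMap2
  have hMap2val : ∀ h c, Map2 h c
      = (sumFunc (P := fun x => Ψ.I x = ∅) h ∘ₗ e.toLinearMap)
          (Finsupp.single (rep c) 1) := by
    intro h c
    rfl
  have hinj : Function.Injective Map2 := by
    rw [← LinearMap.ker_eq_bot, LinearMap.ker_eq_bot']
    intro h hh
    set f' := sumFunc (P := fun x => Ψ.I x = ∅) h ∘ₗ e.toLinearMap with hf'
    have heig : ∀ (i : B) (m : V →₀ RatFunc F),
        f' (Γ.tau (RatFunc F) RatFunc.X i m) = RatFunc.X ^ 2 * f' m :=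
      pulled_eigen Γ Ψ e hint h
    have hiff : ∀ (i : B) (v : V),
        (fun v => f' (Finsupp.single v 1)) v = 0
          ↔ (fun v => f' (Finsupp.single v 1)) (Γ.mate i v) = 0 :=
      fun i v => func_iff Γ f' heig i v
    have hzero : ∀ v : V, f' (Finsupp.single v 1) = 0 := by
      intro v
      have h1 : Map2 h (mkc v) = 0 := by rw [hh]; rfl
      rw [hMap2val] at h1
      refine prop_zero Γ (fun v => f' (Finsupp.single v 1)) hiff ?_ h1
      rw [hrep]
    exact pulled_zero Ψ e h hzero
  calc Fintype.card {x : X // Ψ.I x = ∅}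
      = Module.finrank (RatFunc F) ({x : X // Ψ.I x = ∅} → RatFunc F) :=
        (Module.finrank_fintype_fun_eq_card _).symm
    _ ≤ Module.finrank (RatFunc F) (Comp → RatFunc F) :=
        LinearMap.finrank_le_finrank_of_injective hinj
    _ = Fintype.card Comp := Module.finrank_fintype_fun_eq_card _

/-- Leg 3: `N_Ψ(univ) ≤ #components`. -/
lemma nuniv_le_comps
    (hint : ∀ (i : B) (m : V →₀ RatFunc F),
      e (Γ.tau (RatFunc F) RatFunc.X i m) = Ψ.tau (RatFunc F) RatFunc.X i (e m)) :
    Fintype.card {x : X // Ψ.I x = Set.univ} ≤ Fintype.card Comp := by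
  set rep : Comp → V := fun c => c.exists_rep.choose with hrepdef
  have hrep : ∀ c, mkc (rep c) = c := fun c => c.exists_rep.choose_spec
  set Map3 : ({x : X // Ψ.I x = Set.univ} → RatFunc F) →ₗ[RatFunc F] (Comp → RatFunc F) :=
    (LinearMap.pi fun c => Finsupp.lapply (rep c)) ∘ₗ e.symm.toLinearMap ∘ₗ
      combX (P := fun x => Ψ.I x = Set.univ) with hMap3
  have hinj : Function.Injective Map3 := by
    rw [← LinearMap.ker_eq_bot, LinearMap.ker_eq_bot']
    intro h hh
    set m := e.symm (combX (P := fun x : X => Ψ.I x = Set.univ) h) with hmdef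
    have hsgnX : ∀ i : B, Ψ.tau (RatFunc F) RatFunc.X i
        (combX (P := fun x : X => Ψ.I x = Set.univ) h)
          = -(combX (P := fun x : X => Ψ.I x = Set.univ) h) := by
      intro i
      rw [combX_apply, map_sum, ← Finset.sum_neg_distrib]
      refine Finset.sum_congr rfl fun xs _ => ?_
      rw [map_smul]
      rw [P.tau_single]
      have hix : i ∈ Ψ.I xs.1 := by rw [xs.2]; trivial
      rw [WGraphData.tauFun, if_pos hix]
      rw [smul_neg]
    have hsgn : ∀ i : B, Γ.tau (RatFunc F) RatFunc.X i m = -m := by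
      intro i
      apply e.injective
      rw [hint, hmdef, e.apply_symm_apply, hsgnX, map_neg, e.apply_symm_apply]
    have hiff : ∀ (i : B) (v : V), (fun v => m v) v = 0 ↔ (fun v => m v) (Γ.mate i v) = 0 :=
      fun i v => vec_iff Γ m hsgn i v
    have hzero : ∀ v : V, m v = 0 := by
      intro v
      have h1 : Map3 h (mkc v) = 0 := by rw [hh]; rfl
      have h2 : m (rep (mkc v)) = 0 := by
        rw [← h1]
        rfl
      exact prop_zero Γ (fun v => m v) hiff (by rw [hrep]) h2
    have hm0 : m = 0 := Finsupp.ext hzero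
    have hcombX : combX (P := fun x : X => Ψ.I x = Set.univ) h = 0 := by
      have := congrArg e hm0
      rw [hmdef, e.apply_symm_apply, map_zero] at this
      exact this
    funext xs
    have h2 : combX (P := fun x : X => Ψ.I x = Set.univ) h xs.1 = 0 := by
      rw [hcombX]; rfl
    rw [combX_coord] at h2
    simpa using h2
  calc Fintype.card {x : X // Ψ.I x = Set.univ}
      = Module.finrank (RatFunc F) ({x : X // Ψ.I x = Set.univ} → RatFunc F) :=
        (Module.finrank_fintype_fun_eq_card _).symm
    _ ≤ Module.finrank (RatFunc F) (Comp → RatFunc F) :=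
        LinearMap.finrank_le_finrank_of_injective hinj
    _ = Fintype.card Comp := Module.finrank_fintype_fun_eq_card _

end Legs

end WDUniq

end

set_option synthInstance.maxHeartbeats 1000000
set_option maxHeartbeats 1000000

open scoped Classical
noncomputable section
open Finsupp Polynomial

namespace WDUniq

variable {F : Type*} [Field F] {B V X : Type*} [Fintype V] [Fintype X]
variable (Γ : WDigraphData B V) (Ψ : WGraphData B X F)

local notation "K" => RatFunc F
local notation "alg" => algebraMap (Polynomial F) (RatFunc F)


lemma alg_ite (P : Prop) [Decidable P] :
    algebraMap (Polynomial F) (RatFunc F) (if P then 1 else 0) = if P then 1 else 0 := by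
  split <;> simp

lemma alg_ite' (P : Prop) [Decidable P] (a : F) :
    algebraMap (Polynomial F) (RatFunc F) (if P then Polynomial.C a else 0)
      = if P then algebraMap F (RatFunc F) a else 0 := by
  split
  · rw [RatFunc.algebraMap_C, RatFunc.algebraMap_eq_C]
  · rw [map_zero]

/-- polynomial matrix of `τ_i` on the `Γ` side; entry `(w, v)` is the coefficient of `w`
in `τ_i(v)`. -/
def gmat (i : B) : Matrix V V (Polynomial F) := fun w v =>
  if Γ.head i v then
    if Γ.dash i v then
      (Polynomial.X ^ 2 - Polynomial.X) * (if Γ.mate i v = w then 1 else 0)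
        + (Polynomial.X ^ 2 - Polynomial.X - 1) * (if v = w then 1 else 0)
    else
      Polynomial.X ^ 2 * (if Γ.mate i v = w then 1 else 0)
        + (Polynomial.X ^ 2 - 1) * (if v = w then 1 else 0)
  else
    if Γ.dash i v then
      Polynomial.X * (if v = w then 1 else 0)
        + (Polynomial.X + 1) * (if Γ.mate i v = w then 1 else 0)
    else
      (if Γ.mate i v = w then 1 else 0)

/-- polynomial matrix of `τ_i` on the `Ψ` side. -/
def pmat (i : B) : Matrix X X (Polynomial F) := fun y x =>
  if i ∈ Ψ.I x then -(if x = y then 1 else 0)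
  else Polynomial.X ^ 2 * (if x = y then 1 else 0)
    + Polynomial.X * (if i ∈ Ψ.I y then Polynomial.C (Ψ.mu y x) else 0)

lemma gmat_map (i : B) :
    (gmat Γ i).map (algebraMap (Polynomial F) (RatFunc F))
      = LinearMap.toMatrixAlgEquiv (Finsupp.basisSingleOne)
          (Γ.tau (RatFunc F) RatFunc.X i) := by
  ext w v
  rw [Matrix.map_apply, LinearMap.toMatrixAlgEquiv_apply]
  have hb : (Finsupp.basisSingleOne : Module.Basis V (RatFunc F) (V →₀ RatFunc F)) v
      = Finsupp.single v 1 := by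
    simp
  rw [hb, G.tau_single]
  have hrepr : ∀ z : V →₀ RatFunc F,
      ((Finsupp.basisSingleOne : Module.Basis V (RatFunc F) (V →₀ RatFunc F)).repr z) w = z w := fun z => rfl
  rw [hrepr]
  rw [WDigraphData.tauFun, gmat]
  split
  · split <;>
      simp only [map_add, map_mul, map_sub, map_pow, map_one, RatFunc.algebraMap_X, alg_ite,
        Finsupp.add_apply, Finsupp.smul_apply, Finsupp.single_apply, smul_eq_mul]
  · split <;>
      simp only [map_add, map_mul, map_sub, map_pow, map_one, RatFunc.algebraMap_X, alg_ite,
        Finsupp.add_apply, Finsupp.smul_apply, Finsupp.single_apply, smul_eq_mul]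

lemma pmat_map (i : B) :
    (pmat Ψ i).map (algebraMap (Polynomial F) (RatFunc F))
      = LinearMap.toMatrixAlgEquiv (Finsupp.basisSingleOne)
          (Ψ.tau (RatFunc F) RatFunc.X i) := by
  ext y x
  rw [Matrix.map_apply, LinearMap.toMatrixAlgEquiv_apply]
  have hb : (Finsupp.basisSingleOne : Module.Basis X (RatFunc F) (X →₀ RatFunc F)) x
      = Finsupp.single x 1 := by
    simp
  rw [hb, P.tau_single]
  have hrepr : ∀ z : X →₀ RatFunc F,
      ((Finsupp.basisSingleOne : Module.Basis X (RatFunc F) (X →₀ RatFunc F)).repr z) y = z y := fun z => rfl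
  rw [hrepr]
  rw [P.tauFun_coord, pmat]
  split
  · rw [map_neg, alg_ite]
    split <;> simp
  · rw [map_add, map_mul, map_mul, alg_ite, alg_ite', map_pow, RatFunc.algebraMap_X]

lemma trace_map_poly {n : Type*} [Fintype n] (A : Matrix n n (Polynomial F)) :
    alg (Matrix.trace A) = Matrix.trace (A.map alg) := by
  rw [Matrix.trace, Matrix.trace, map_sum]
  exact Finset.sum_congr rfl fun v _ => rfl

section TraceEq

variable (e : (V →₀ RatFunc F) ≃ₗ[RatFunc F] (X →₀ RatFunc F))

lemma prod_intertwine
    (hint : ∀ (i : B) (m : V →₀ RatFunc F),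
      e (Γ.tau (RatFunc F) RatFunc.X i m) = Ψ.tau (RatFunc F) RatFunc.X i (e m))
    (l : List B) :
    e.toLinearMap ∘ₗ (l.map (Γ.tau (RatFunc F) RatFunc.X)).prod
      = (l.map (Ψ.tau (RatFunc F) RatFunc.X)).prod ∘ₗ e.toLinearMap := by
  induction l with
  | nil =>
      apply LinearMap.ext
      intro m
      rfl
  | cons i l ih =>
      apply LinearMap.ext
      intro m
      simp only [List.map_cons, List.prod_cons, LinearMap.comp_apply, Module.End.mul_apply,
        LinearEquiv.coe_coe]
      rw [hint]
      have := congrArg (fun (f : (V →₀ RatFunc F) →ₗ[RatFunc F] (X →₀ RatFunc F)) => f m) ih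
      simp only [LinearMap.comp_apply, LinearEquiv.coe_coe] at this
      rw [this]

lemma trace_tau_eq
    (hint : ∀ (i : B) (m : V →₀ RatFunc F),
      e (Γ.tau (RatFunc F) RatFunc.X i m) = Ψ.tau (RatFunc F) RatFunc.X i (e m))
    (l : List B) :
    LinearMap.trace (RatFunc F) (V →₀ RatFunc F) ((l.map (Γ.tau (RatFunc F) RatFunc.X)).prod)
      = LinearMap.trace (RatFunc F) (X →₀ RatFunc F)
          ((l.map (Ψ.tau (RatFunc F) RatFunc.X)).prod) := by
  have hconj : e.conj ((l.map (Γ.tau (RatFunc F) RatFunc.X)).prod)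
      = (l.map (Ψ.tau (RatFunc F) RatFunc.X)).prod := by
    apply LinearMap.ext
    intro m
    rw [LinearEquiv.conj_apply]
    simp only [LinearMap.comp_apply, LinearEquiv.coe_coe]
    have := congrArg (fun (f : (V →₀ RatFunc F) →ₗ[RatFunc F] (X →₀ RatFunc F)) =>
      f (e.symm m)) (prod_intertwine Γ Ψ e hint l)
    simp only [LinearMap.comp_apply, LinearEquiv.coe_coe] at this
    rw [this, e.apply_symm_apply]
  rw [← hconj, LinearMap.trace_conj']

/-- the polynomial trace identity. -/
lemma trace_poly_eq
    (hint : ∀ (i : B) (m : V →₀ RatFunc F),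
      e (Γ.tau (RatFunc F) RatFunc.X i m) = Ψ.tau (RatFunc F) RatFunc.X i (e m))
    (l : List B) :
    Matrix.trace ((l.map (gmat Γ)).prod) = Matrix.trace ((l.map (pmat Ψ)).prod) := by
  apply RatFunc.algebraMap_injective F
  rw [trace_map_poly, trace_map_poly]
  have hG : ((l.map (gmat Γ)).prod).map alg
      = LinearMap.toMatrixAlgEquiv (Finsupp.basisSingleOne)
          ((l.map (Γ.tau (RatFunc F) RatFunc.X)).prod) := by
    have h1 : ((l.map (gmat Γ)).prod).map alg
        = ((alg).mapMatrix : Matrix V V (Polynomial F) →+* Matrix V V (RatFunc F))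
            ((l.map (gmat Γ)).prod) := rfl
    rw [h1, map_list_prod, map_list_prod]
    rw [List.map_map, List.map_map]
    have hfun : (⇑((alg).mapMatrix : Matrix V V (Polynomial F) →+* Matrix V V (RatFunc F))
        ∘ gmat Γ) = (⇑(LinearMap.toMatrixAlgEquiv (Finsupp.basisSingleOne
          : Module.Basis V (RatFunc F) (V →₀ RatFunc F))) ∘ Γ.tau (RatFunc F) RatFunc.X) := by
      funext i
      show ((alg).mapMatrix) (gmat Γ i) = _
      rw [RingHom.mapMatrix_apply]
      exact gmat_map Γ i
    rw [hfun]
  have hP : ((l.map (pmat Ψ)).prod).map alg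
      = LinearMap.toMatrixAlgEquiv (Finsupp.basisSingleOne)
          ((l.map (Ψ.tau (RatFunc F) RatFunc.X)).prod) := by
    have h1 : ((l.map (pmat Ψ)).prod).map alg
        = ((alg).mapMatrix : Matrix X X (Polynomial F) →+* Matrix X X (RatFunc F))
            ((l.map (pmat Ψ)).prod) := rfl
    rw [h1, map_list_prod, map_list_prod]
    rw [List.map_map, List.map_map]
    have hfun : (⇑((alg).mapMatrix : Matrix X X (Polynomial F) →+* Matrix X X (RatFunc F))
        ∘ pmat Ψ) = (⇑(LinearMap.toMatrixAlgEquiv (Finsupp.basisSingleOne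
          : Module.Basis X (RatFunc F) (X →₀ RatFunc F))) ∘ Ψ.tau (RatFunc F) RatFunc.X) := by
      funext i
      show ((alg).mapMatrix) (pmat Ψ i) = _
      rw [RingHom.mapMatrix_apply]
      exact pmat_map Ψ i
    rw [hfun]
  rw [hG, hP]
  have hGt : (LinearMap.toMatrixAlgEquiv (Finsupp.basisSingleOne
      : Module.Basis V (RatFunc F) (V →₀ RatFunc F))) ((l.map (Γ.tau (RatFunc F) RatFunc.X)).prod)
      = LinearMap.toMatrix Finsupp.basisSingleOne Finsupp.basisSingleOne
          ((l.map (Γ.tau (RatFunc F) RatFunc.X)).prod) := rfl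
  have hPt : (LinearMap.toMatrixAlgEquiv (Finsupp.basisSingleOne
      : Module.Basis X (RatFunc F) (X →₀ RatFunc F))) ((l.map (Ψ.tau (RatFunc F) RatFunc.X)).prod)
      = LinearMap.toMatrix Finsupp.basisSingleOne Finsupp.basisSingleOne
          ((l.map (Ψ.tau (RatFunc F) RatFunc.X)).prod) := rfl
  rw [hGt, hPt, ← LinearMap.trace_eq_matrix_trace, ← LinearMap.trace_eq_matrix_trace]
  exact trace_tau_eq Γ Ψ e hint l

end TraceEq

/-- the specialized matrices at `u = 0`. -/
def tmat (i : B) : Matrix V V F := fun w v =>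
  if Γ.head i v then (if v = w then (-1 : F) else 0)
  else (if Γ.mate i v = w then 1 else 0)

def smat (i : B) : Matrix X X F := fun y x =>
  if i ∈ Ψ.I x then (if x = y then (-1 : F) else 0) else 0

lemma ev_ite (P : Prop) [Decidable P] :
    (Polynomial.evalRingHom (0 : F)) (if P then 1 else 0) = if P then (1 : F) else 0 := by
  split <;> simp

lemma gmat_eval (i : B) : (gmat Γ i).map (Polynomial.evalRingHom (0 : F)) = tmat Γ i := by
  have hX : (Polynomial.evalRingHom (0 : F)) Polynomial.X = 0 := by simp
  ext w v
  rw [Matrix.map_apply, gmat, tmat]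
  split
  · split <;>
      · simp only [map_add, map_mul, map_sub, map_pow, map_one, hX, ev_ite]
        by_cases h2 : v = w <;> by_cases h1 : Γ.mate i v = w <;>
          simp only [h1, h2, if_true, if_false] <;> ring
  · split
    · simp only [map_add, map_mul, map_one, hX, ev_ite]
      by_cases h2 : v = w <;> by_cases h1 : Γ.mate i v = w <;>
        simp only [h1, h2, if_true, if_false] <;> ring
    · rw [ev_ite]

lemma pmat_eval (i : B) : (pmat Ψ i).map (Polynomial.evalRingHom (0 : F)) = smat Ψ i := by
  have hX : (Polynomial.evalRingHom (0 : F)) Polynomial.X = 0 := by simp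
  ext y x
  rw [Matrix.map_apply, pmat, smat]
  split
  · rw [map_neg, ev_ite]
    split <;> simp
  · simp only [map_add, map_mul, map_pow, hX, ev_ite]
    ring

lemma trace_eval_eq (e : (V →₀ RatFunc F) ≃ₗ[RatFunc F] (X →₀ RatFunc F))
    (hint : ∀ (i : B) (m : V →₀ RatFunc F),
      e (Γ.tau (RatFunc F) RatFunc.X i m) = Ψ.tau (RatFunc F) RatFunc.X i (e m))
    (l : List B) :
    Matrix.trace ((l.map (tmat Γ)).prod) = Matrix.trace ((l.map (smat Ψ)).prod) := by
  have h1 := congrArg (Polynomial.evalRingHom (0 : F)) (trace_poly_eq Γ Ψ e hint l)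
  have hGT : Polynomial.evalRingHom (0 : F) (Matrix.trace ((l.map (gmat Γ)).prod))
      = Matrix.trace (((l.map (gmat Γ)).prod).map (Polynomial.evalRingHom (0 : F))) := by
    rw [Matrix.trace, Matrix.trace, map_sum]
    exact Finset.sum_congr rfl fun v _ => rfl
  have hPT : Polynomial.evalRingHom (0 : F) (Matrix.trace ((l.map (pmat Ψ)).prod))
      = Matrix.trace (((l.map (pmat Ψ)).prod).map (Polynomial.evalRingHom (0 : F))) := by
    rw [Matrix.trace, Matrix.trace, map_sum]
    exact Finset.sum_congr rfl fun v _ => rfl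
  rw [hGT, hPT] at h1
  have hG : ((l.map (gmat Γ)).prod).map (Polynomial.evalRingHom (0 : F))
      = (l.map (tmat Γ)).prod := by
    have h2 : ((l.map (gmat Γ)).prod).map (Polynomial.evalRingHom (0 : F))
        = ((Polynomial.evalRingHom (0 : F)).mapMatrix :
            Matrix V V (Polynomial F) →+* Matrix V V F) ((l.map (gmat Γ)).prod) := rfl
    rw [h2, map_list_prod, List.map_map]
    have hfun : (⇑((Polynomial.evalRingHom (0 : F)).mapMatrix :
        Matrix V V (Polynomial F) →+* Matrix V V F) ∘ gmat Γ) = tmat Γ := by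
      funext i
      show ((Polynomial.evalRingHom (0 : F)).mapMatrix) (gmat Γ i) = _
      rw [RingHom.mapMatrix_apply]
      exact gmat_eval Γ i
    rw [hfun]
  have hP : ((l.map (pmat Ψ)).prod).map (Polynomial.evalRingHom (0 : F))
      = (l.map (smat Ψ)).prod := by
    have h2 : ((l.map (pmat Ψ)).prod).map (Polynomial.evalRingHom (0 : F))
        = ((Polynomial.evalRingHom (0 : F)).mapMatrix :
            Matrix X X (Polynomial F) →+* Matrix X X F) ((l.map (pmat Ψ)).prod) := rfl
    rw [h2, map_list_prod, List.map_map]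
    have hfun : (⇑((Polynomial.evalRingHom (0 : F)).mapMatrix :
        Matrix X X (Polynomial F) →+* Matrix X X F) ∘ pmat Ψ) = smat Ψ := by
      funext i
      show ((Polynomial.evalRingHom (0 : F)).mapMatrix) (pmat Ψ i) = _
      rw [RingHom.mapMatrix_apply]
      exact pmat_eval Ψ i
    rw [hfun]
  rw [hG, hP] at h1
  exact h1

/-- trace of the `Ψ`-side specialized product. -/
lemma smat_trace (l : List B) :
    Matrix.trace ((l.map (smat Ψ)).prod)
      = (-1 : F) ^ l.length *
          ((Finset.univ.filter fun x : X => ∀ i ∈ l, i ∈ Ψ.I x).card : F) := by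
  classical
  have hdiag : ∀ i, smat Ψ i = Matrix.diagonal (fun x => if i ∈ Ψ.I x then (-1 : F) else 0) := by
    intro i
    ext y x
    rw [smat, Matrix.diagonal_apply]
    by_cases h : y = x
    · subst h; simp
    · have h' : ¬ (x = y) := fun hh => h hh.symm
      simp [h, h']
  have hx : ∀ x : X, (l.map (fun i => if i ∈ Ψ.I x then (-1 : F) else 0)).prod
      = if (∀ i ∈ l, i ∈ Ψ.I x) then (-1 : F) ^ l.length else 0 := by
    intro x
    induction l with
    | nil => simp
    | cons i l ih =>
        rw [List.map_cons, List.prod_cons, ih]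
        by_cases hi : i ∈ Ψ.I x
        · by_cases hall : ∀ j ∈ l, j ∈ Ψ.I x
          · have hall' : ∀ j ∈ (i :: l), j ∈ Ψ.I x := by
              intro j hj
              rcases List.mem_cons.1 hj with rfl | hj'
              · exact hi
              · exact hall j hj'
            rw [if_pos hi, if_pos hall, if_pos hall', List.length_cons, pow_succ]
            ring
          · have hnall : ¬ ∀ j ∈ (i :: l), j ∈ Ψ.I x := by
              intro hc
              exact hall fun j hj => hc j (List.mem_cons_of_mem i hj)
            rw [if_pos hi, if_neg hall, if_neg hnall, mul_zero]
        · have hnall : ¬ ∀ j ∈ (i :: l), j ∈ Ψ.I x := by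
            intro hc
            exact hi (hc i List.mem_cons_self)
          rw [if_neg hi, if_neg hnall, zero_mul]
  have hprod : (l.map (smat Ψ)).prod
      = Matrix.diagonal (fun x => (l.map (fun i => if i ∈ Ψ.I x then (-1 : F) else 0)).prod) := by
    clear hx
    induction l with
    | nil => simp [Matrix.diagonal_one]
    | cons i l ih =>
        rw [List.map_cons, List.prod_cons, ih, hdiag i, Matrix.diagonal_mul_diagonal]
        congr 1
  rw [hprod, Matrix.trace_diagonal]
  rw [Finset.sum_congr rfl fun x _ => hx x]
  rw [← Finset.sum_filter]
  rw [Finset.sum_const, nsmul_eq_mul]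
  ring

section GammaTrace

/-- the deterministic walk of the specialized `Γ`-matrices. -/
def Wk : List B → V → V
  | [], v => v
  | i :: l, v => if Γ.head i (Wk l v) then Wk l v else Γ.mate i (Wk l v)

/-- the sign of the walk. -/
def Sg : List B → V → F
  | [], _ => 1
  | i :: l, v => (if Γ.head i (Wk Γ l v) then (-1 : F) else 1) * Sg l v

lemma tmat_prod (l : List B) (w v : V) :
    ((l.map (tmat Γ)).prod) w v = if Wk Γ l v = w then Sg (F := F) Γ l v else 0 := by
  induction l generalizing w with
  | nil =>
      rw [List.map_nil, List.prod_nil, Matrix.one_apply]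
      by_cases h : v = w
      · subst h; simp [Wk, Sg]
      · have h' : ¬ (w = v) := fun hh => h hh.symm
        simp [Wk, Sg, h, h']
  | cons i l ih =>
      rw [List.map_cons, List.prod_cons, Matrix.mul_apply]
      rw [Finset.sum_eq_single_of_mem (Wk Γ l v) (Finset.mem_univ _)]
      · rw [ih (Wk Γ l v), if_pos rfl]
        simp only [tmat, Wk, Sg]
        by_cases hh : Γ.head i (Wk Γ l v) = true
        · simp only [hh, if_true]
          by_cases hw : Wk Γ l v = w
          · simp [hw]
          · simp [hw]
        · have hh' : Γ.head i (Wk Γ l v) = false := by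
            revert hh; cases Γ.head i (Wk Γ l v) <;> simp
          simp only [hh', Bool.false_eq_true, if_false]
          by_cases hw : Γ.mate i (Wk Γ l v) = w
          · simp [hw]
          · simp [hw]
      · intro z _ hz
        rw [ih z, if_neg (fun hh => hz hh.symm), mul_zero]

lemma wk_reach (l : List B) (v : V) : Relation.ReflTransGen Γ.DirEdge v (Wk Γ l v) := by
  induction l with
  | nil => exact Relation.ReflTransGen.refl
  | cons i l ih =>
      show Relation.ReflTransGen Γ.DirEdge v
        (if Γ.head i (Wk Γ l v) then Wk Γ l v else Γ.mate i (Wk Γ l v))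
      by_cases hh : Γ.head i (Wk Γ l v) = true
      · rw [if_pos hh]
        exact ih
      · have hh' : Γ.head i (Wk Γ l v) = false := by
          revert hh; cases Γ.head i (Wk Γ l v) <;> simp
        rw [hh']
        simp only [Bool.false_eq_true, if_false]
        exact Relation.ReflTransGen.tail ih ⟨i, hh', rfl⟩

lemma wk_fixed (hacyc : ∀ c, Γ.AcyclicComponent c) (l : List B) (v : V)
    (hfix : Wk Γ l v = v) : ∀ i ∈ l, Γ.head i v = true := by
  induction l with
  | nil => intro i hi; exact absurd hi List.not_mem_nil
  | cons i l ih =>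
      have hfix' : (if Γ.head i (Wk Γ l v) then Wk Γ l v else Γ.mate i (Wk Γ l v)) = v := hfix
      by_cases hh : Γ.head i (Wk Γ l v) = true
      · rw [if_pos hh] at hfix'
        intro j hj
        rcases List.mem_cons.1 hj with hji | hjl
        · subst hji
          rw [← hfix']
          exact hh
        · exact ih hfix' j hjl
      · have hh' : Γ.head i (Wk Γ l v) = false := by
          revert hh; cases Γ.head i (Wk Γ l v) <;> simp
        rw [hh'] at hfix'
        simp only [Bool.false_eq_true, if_false] at hfix'
        exfalso
        exact no_return Γ hacyc ⟨i, hh', hfix'⟩ (wk_reach Γ l v)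

lemma wk_of_heads (l : List B) (v : V) (hall : ∀ i ∈ l, Γ.head i v = true) :
    Wk Γ l v = v ∧ Sg (F := F) Γ l v = (-1 : F) ^ l.length := by
  induction l with
  | nil => exact ⟨rfl, by simp [Sg]⟩
  | cons i l ih =>
      have hall' : ∀ j ∈ l, Γ.head j v = true := fun j hj =>
        hall j (List.mem_cons_of_mem i hj)
      obtain ⟨h1, h2⟩ := ih hall'
      have hhead : Γ.head i (Wk Γ l v) = true := by
        rw [h1]
        exact hall i List.mem_cons_self
      constructor
      · show (if Γ.head i (Wk Γ l v) then Wk Γ l v else Γ.mate i (Wk Γ l v)) = v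
        rw [if_pos hhead, h1]
      · show (if Γ.head i (Wk Γ l v) then (-1 : F) else 1) * Sg (F := F) Γ l v = _
        rw [if_pos hhead, h2, List.length_cons, pow_succ]
        ring

lemma tmat_trace (hacyc : ∀ c, Γ.AcyclicComponent c) (l : List B) :
    Matrix.trace ((l.map (tmat Γ)).prod)
      = (-1 : F) ^ l.length *
          ((Finset.univ.filter fun v : V => ∀ i ∈ l, Γ.head i v = true).card : F) := by
  classical
  rw [Matrix.trace]
  have hdiag : ∀ v : V, ((l.map (tmat Γ)).prod).diag v
      = if (∀ i ∈ l, Γ.head i v = true) then (-1 : F) ^ l.length else 0 := by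
    intro v
    rw [Matrix.diag_apply, tmat_prod]
    by_cases hall : ∀ i ∈ l, Γ.head i v = true
    · obtain ⟨h1, h2⟩ := wk_of_heads (F := F) Γ l v hall
      rw [if_pos hall, if_pos h1, h2]
    · rw [if_neg hall]
      have : ¬ (Wk Γ l v = v) := fun h => hall (wk_fixed Γ hacyc l v h)
      rw [if_neg this]
  rw [Finset.sum_congr rfl fun v _ => hdiag v]
  rw [← Finset.sum_filter]
  rw [Finset.sum_const, nsmul_eq_mul]
  ring

end GammaTrace

/-- **the count identity**: for every word, the number of vertices of `Γ` whose in-set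
contains all the letters equals the number of vertices of `Ψ` whose label set contains
all the letters. -/
lemma count_eq [CharZero F] (e : (V →₀ RatFunc F) ≃ₗ[RatFunc F] (X →₀ RatFunc F))
    (hint : ∀ (i : B) (m : V →₀ RatFunc F),
      e (Γ.tau (RatFunc F) RatFunc.X i m) = Ψ.tau (RatFunc F) RatFunc.X i (e m))
    (hacyc : ∀ c, Γ.AcyclicComponent c) (l : List B) :
    (Finset.univ.filter fun v : V => ∀ i ∈ l, Γ.head i v = true).card
      = (Finset.univ.filter fun x : X => ∀ i ∈ l, i ∈ Ψ.I x).card := by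
  have h1 := trace_eval_eq Γ Ψ e hint l
  rw [tmat_trace Γ hacyc l, smat_trace Ψ l] at h1
  have h2 := mul_left_cancel₀ (pow_ne_zero l.length (neg_ne_zero.2 (one_ne_zero' F))) h1
  exact_mod_cast h2

end WDUniq

end

set_option synthInstance.maxHeartbeats 1000000
set_option maxHeartbeats 1000000

open scoped Classical
noncomputable section
open Finsupp

namespace WDUniq

/-- inclusion–exclusion for "all-containment" counts. -/
lemma inclusion_exclusion {α B' : Type*} [Fintype α] [Fintype B'] (h : α → Finset B') :
    ((Finset.univ.filter fun a : α => h a = ∅).card : ℤ)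
      = ∑ W ∈ (Finset.univ : Finset B').powerset,
          (-1 : ℤ) ^ W.card * ((Finset.univ.filter fun a => W ⊆ h a).card : ℤ) := by
  classical
  have hrhs : ∀ W : Finset B', ((Finset.univ.filter fun a => W ⊆ h a).card : ℤ)
      = ∑ a : α, if W ⊆ h a then (1 : ℤ) else 0 := by
    intro W
    rw [Finset.card_filter]
    push_cast
    rfl
  have hstep : ∀ W ∈ (Finset.univ : Finset B').powerset,
      (-1 : ℤ) ^ W.card * ((Finset.univ.filter fun a => W ⊆ h a).card : ℤ)
        = ∑ a : α, (if W ⊆ h a then (-1 : ℤ) ^ W.card else 0) := by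
    intro W _
    rw [hrhs W, Finset.mul_sum]
    refine Finset.sum_congr rfl fun a _ => ?_
    split <;> simp
  rw [Finset.sum_congr rfl hstep, Finset.sum_comm]
  have hinner : ∀ a : α, (∑ W ∈ (Finset.univ : Finset B').powerset,
      (if W ⊆ h a then (-1 : ℤ) ^ W.card else 0)) = if h a = ∅ then 1 else 0 := by
    intro a
    rw [← Finset.sum_filter]
    have hfil : (Finset.univ : Finset B').powerset.filter (fun W => W ⊆ h a)
        = (h a).powerset := by
      ext W
      simp [Finset.mem_powerset, Finset.subset_univ]
    rw [hfil]
    exact Finset.sum_powerset_neg_one_pow_card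
  rw [Finset.sum_congr rfl fun a _ => hinner a]
  rw [Finset.card_filter]
  push_cast
  rfl

variable {F : Type*} [Field F] {B V X : Type*} [Fintype V] [Fintype X] [Fintype B]
variable (Γ : WDigraphData B V) (Ψ : WGraphData B X F)

local notation "mkc" => Γ.underlying.connectedComponentMk

lemma count_eq_finset [CharZero F] (e : (V →₀ RatFunc F) ≃ₗ[RatFunc F] (X →₀ RatFunc F))
    (hint : ∀ (i : B) (m : V →₀ RatFunc F),
      e (Γ.tau (RatFunc F) RatFunc.X i m) = Ψ.tau (RatFunc F) RatFunc.X i (e m))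
    (hacyc : ∀ c, Γ.AcyclicComponent c) (W : Finset B) :
    (Finset.univ.filter fun v : V => ∀ i ∈ W, Γ.head i v = true).card
      = (Finset.univ.filter fun x : X => ∀ i ∈ W, i ∈ Ψ.I x).card := by
  have h := count_eq Γ Ψ e hint hacyc W.toList
  simp only [Finset.mem_toList] at h
  exact h

/-- number of sources equals `N_Ψ(∅)`. -/
lemma sources_eq [CharZero F] (e : (V →₀ RatFunc F) ≃ₗ[RatFunc F] (X →₀ RatFunc F))
    (hint : ∀ (i : B) (m : V →₀ RatFunc F),
      e (Γ.tau (RatFunc F) RatFunc.X i m) = Ψ.tau (RatFunc F) RatFunc.X i (e m))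
    (hacyc : ∀ c, Γ.AcyclicComponent c) :
    (Finset.univ.filter fun v : V => Γ.In v = ∅).card
      = (Finset.univ.filter fun x : X => Ψ.I x = ∅).card := by
  set hΓ : V → Finset B := fun v => Finset.univ.filter fun i => Γ.head i v = true with hhΓ
  set hΨ : X → Finset B := fun x => Finset.univ.filter fun i => i ∈ Ψ.I x with hhΨ
  have key : ∀ W : Finset B,
      ((Finset.univ.filter fun v : V => W ⊆ hΓ v).card : ℤ)
        = ((Finset.univ.filter fun x : X => W ⊆ hΨ x).card : ℤ) := by
    intro W
    have e1 : (Finset.univ.filter fun v : V => W ⊆ hΓ v)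
        = Finset.univ.filter fun v : V => ∀ i ∈ W, Γ.head i v = true := by
      apply Finset.filter_congr
      intro v _
      constructor
      · intro hs i hi
        have := hs hi
        rw [hhΓ] at this
        simpa using this
      · intro hl i hi
        rw [hhΓ]
        simp only [Finset.mem_filter, Finset.mem_univ, true_and]
        exact hl i hi
    have e2 : (Finset.univ.filter fun x : X => W ⊆ hΨ x)
        = Finset.univ.filter fun x : X => ∀ i ∈ W, i ∈ Ψ.I x := by
      apply Finset.filter_congr
      intro x _
      constructor
      · intro hs i hi
        have := hs hi
        rw [hhΨ] at this
        simpa using this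
      · intro hl i hi
        rw [hhΨ]
        simp only [Finset.mem_filter, Finset.mem_univ, true_and]
        exact hl i hi
    rw [e1, e2]
    exact_mod_cast count_eq_finset Γ Ψ e hint hacyc W
  have hie1 := inclusion_exclusion hΓ
  have hie2 := inclusion_exclusion hΨ
  have hsum : (∑ W ∈ (Finset.univ : Finset B).powerset,
        (-1 : ℤ) ^ W.card * ((Finset.univ.filter fun v : V => W ⊆ hΓ v).card : ℤ))
      = ∑ W ∈ (Finset.univ : Finset B).powerset,
        (-1 : ℤ) ^ W.card * ((Finset.univ.filter fun x : X => W ⊆ hΨ x).card : ℤ) :=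
    Finset.sum_congr rfl fun W _ => by rw [key W]
  have hz : ((Finset.univ.filter fun v : V => hΓ v = ∅).card : ℤ)
      = ((Finset.univ.filter fun x : X => hΨ x = ∅).card : ℤ) := by
    rw [hie1, hie2, hsum]
  have e3 : (Finset.univ.filter fun v : V => hΓ v = ∅)
      = Finset.univ.filter fun v : V => Γ.In v = ∅ := by
    apply Finset.filter_congr
    intro v _
    rw [hhΓ, in_empty_iff]
    constructor
    · intro hf i
      by_contra hc
      have hi : Γ.head i v = true := by revert hc; cases Γ.head i v <;> simp
      have : i ∈ (∅ : Finset B) := by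
        rw [← hf]
        simp [hi]
      simp at this
    · intro hall
      rw [Finset.filter_eq_empty_iff]
      intro i _
      rw [hall i]
      simp
  have e4 : (Finset.univ.filter fun x : X => hΨ x = ∅)
      = Finset.univ.filter fun x : X => Ψ.I x = ∅ := by
    apply Finset.filter_congr
    intro x _
    rw [hhΨ]
    constructor
    · intro hf
      rw [Set.eq_empty_iff_forall_notMem]
      intro i hi
      have : i ∈ (∅ : Finset B) := by
        rw [← hf]
        simp [hi]
      simp at this
    · intro hIx
      rw [Finset.filter_eq_empty_iff]
      intro i _
      rw [hIx]
      simp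
  rw [e3, e4] at hz
  exact_mod_cast hz

/-- number of sinks equals `N_Ψ(univ)`. -/
lemma sinks_eq [CharZero F] (e : (V →₀ RatFunc F) ≃ₗ[RatFunc F] (X →₀ RatFunc F))
    (hint : ∀ (i : B) (m : V →₀ RatFunc F),
      e (Γ.tau (RatFunc F) RatFunc.X i m) = Ψ.tau (RatFunc F) RatFunc.X i (e m))
    (hacyc : ∀ c, Γ.AcyclicComponent c) :
    (Finset.univ.filter fun v : V => Γ.In v = Set.univ).card
      = (Finset.univ.filter fun x : X => Ψ.I x = Set.univ).card := by
  have h := count_eq_finset Γ Ψ e hint hacyc (Finset.univ : Finset B)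
  have e1 : (Finset.univ.filter fun v : V => ∀ i ∈ (Finset.univ : Finset B), Γ.head i v = true)
      = Finset.univ.filter fun v : V => Γ.In v = Set.univ := by
    apply Finset.filter_congr
    intro v _
    rw [in_univ_iff]
    constructor
    · intro hl i
      exact hl i (Finset.mem_univ i)
    · intro hl i _
      exact hl i
  have e2 : (Finset.univ.filter fun x : X => ∀ i ∈ (Finset.univ : Finset B), i ∈ Ψ.I x)
      = Finset.univ.filter fun x : X => Ψ.I x = Set.univ := by
    apply Finset.filter_congr
    intro x _
    constructor
    · intro hl
      rw [Set.eq_univ_iff_forall]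
      intro i
      exact hl i (Finset.mem_univ i)
    · intro hl i _
      rw [hl]
      trivial
  rw [e1, e2] at h
  exact h

/-- a sum of positive fiber-counts totalling the number of fibers forces all counts 1. -/
lemma fibers_all_one {ι : Type*} [Fintype ι] (a : ι → ℕ) (hpos : ∀ i, 1 ≤ a i)
    (hsum : ∑ i : ι, a i ≤ Fintype.card ι) : ∀ i, a i = 1 := by
  intro i
  by_contra hne
  have h2 : 2 ≤ a i := by
    have := hpos i
    omega
  have h3 : ∑ j ∈ Finset.univ.erase i, (1 : ℕ) ≤ ∑ j ∈ Finset.univ.erase i, a j :=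
    Finset.sum_le_sum fun j _ => hpos j
  have h4 : a i + ∑ j ∈ Finset.univ.erase i, a j = ∑ j : ι, a j :=
    Finset.add_sum_erase Finset.univ a (Finset.mem_univ i)
  rw [Finset.sum_const, smul_eq_mul, mul_one, Finset.card_erase_of_mem (Finset.mem_univ i),
    Finset.card_univ] at h3
  omega

end WDUniq

end

set_option synthInstance.maxHeartbeats 1000000
set_option maxHeartbeats 1000000

open scoped Classical
noncomputable section
open Finsupp

namespace WDUniq

lemma master {F : Type*} [Field F] [CharZero F] {B V X : Type*} [Fintype V] [Fintype X]
    [Fintype B] (Γ : WDigraphData B V) (Ψ : WGraphData B X F)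
    (e : (V →₀ RatFunc F) ≃ₗ[RatFunc F] (X →₀ RatFunc F))
    (hint : ∀ (i : B) (m : V →₀ RatFunc F),
      e (Γ.tau (RatFunc F) RatFunc.X i m) = Ψ.tau (RatFunc F) RatFunc.X i (e m)) :
    ∀ c : Γ.underlying.ConnectedComponent,
      (∃! v : V, Γ.In v = ∅ ∧ Γ.underlying.connectedComponentMk v = c) ∧
      (∃! v : V, Γ.In v = Set.univ ∧ Γ.underlying.connectedComponentMk v = c) := by
  classical
  haveI : Fintype Γ.underlying.ConnectedComponent := Fintype.ofFinite _
  have hacyc := acyclic_all Γ Ψ e hint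
  have hsrc := sources_eq Γ Ψ e hint hacyc
  have hsnk := sinks_eq Γ Ψ e hint hacyc
  have hc1 := comps_le_nempty Γ Ψ e hint
  have hc2 := nempty_le_comps Γ Ψ e hint
  have hc3 := nuniv_le_comps Γ Ψ e hint
  rw [Fintype.card_subtype] at hc1 hc2
  rw [Fintype.card_subtype] at hc3
  -- source fibers
  have hfibS : (Finset.univ.filter fun v : V => Γ.In v = ∅).card
      = ∑ c : Γ.underlying.ConnectedComponent,
          ((Finset.univ.filter fun v : V => Γ.In v = ∅).filter
            fun v => Γ.underlying.connectedComponentMk v = c).card :=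
    Finset.card_eq_sum_card_fiberwise fun v _ =>
      Finset.mem_univ (Γ.underlying.connectedComponentMk v)
  have hfibK : (Finset.univ.filter fun v : V => Γ.In v = Set.univ).card
      = ∑ c : Γ.underlying.ConnectedComponent,
          ((Finset.univ.filter fun v : V => Γ.In v = Set.univ).filter
            fun v => Γ.underlying.connectedComponentMk v = c).card :=
    Finset.card_eq_sum_card_fiberwise fun v _ =>
      Finset.mem_univ (Γ.underlying.connectedComponentMk v)
  have hposS : ∀ c : Γ.underlying.ConnectedComponent,
      1 ≤ ((Finset.univ.filter fun v : V => Γ.In v = ∅).filter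
        fun v => Γ.underlying.connectedComponentMk v = c).card := by
    intro c
    obtain ⟨v, hv1, hv2⟩ := exists_source Γ c (hacyc c)
    have hmem : v ∈ (Finset.univ.filter fun v : V => Γ.In v = ∅).filter
        fun v => Γ.underlying.connectedComponentMk v = c := by
      simp only [Finset.mem_filter, Finset.mem_univ, true_and]
      exact ⟨hv1, hv2⟩
    exact Finset.card_pos.2 ⟨v, hmem⟩
  have hposK : ∀ c : Γ.underlying.ConnectedComponent,
      1 ≤ ((Finset.univ.filter fun v : V => Γ.In v = Set.univ).filter
        fun v => Γ.underlying.connectedComponentMk v = c).card := by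
    intro c
    obtain ⟨v, hv1, hv2⟩ := exists_sink Γ c (hacyc c)
    have hmem : v ∈ (Finset.univ.filter fun v : V => Γ.In v = Set.univ).filter
        fun v => Γ.underlying.connectedComponentMk v = c := by
      simp only [Finset.mem_filter, Finset.mem_univ, true_and]
      exact ⟨hv1, hv2⟩
    exact Finset.card_pos.2 ⟨v, hmem⟩
  have hsumS : (∑ c : Γ.underlying.ConnectedComponent,
      ((Finset.univ.filter fun v : V => Γ.In v = ∅).filter
        fun v => Γ.underlying.connectedComponentMk v = c).card)
      ≤ Fintype.card Γ.underlying.ConnectedComponent := by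
    rw [← hfibS, hsrc]
    omega
  have hsumK : (∑ c : Γ.underlying.ConnectedComponent,
      ((Finset.univ.filter fun v : V => Γ.In v = Set.univ).filter
        fun v => Γ.underlying.connectedComponentMk v = c).card)
      ≤ Fintype.card Γ.underlying.ConnectedComponent := by
    rw [← hfibK, hsnk]
    omega
  have honeS := fibers_all_one _ hposS hsumS
  have honeK := fibers_all_one _ hposK hsumK
  intro c
  constructor
  · obtain ⟨a, ha⟩ := Finset.card_eq_one.1 (honeS c)
    have hamem : a ∈ (Finset.univ.filter fun v : V => Γ.In v = ∅).filter
        fun v => Γ.underlying.connectedComponentMk v = c := by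
      rw [ha]
      exact Finset.mem_singleton_self a
    simp only [Finset.mem_filter, Finset.mem_univ, true_and] at hamem
    refine ⟨a, ⟨hamem.1, hamem.2⟩, ?_⟩
    intro y hy
    have hymem : y ∈ (Finset.univ.filter fun v : V => Γ.In v = ∅).filter
        fun v => Γ.underlying.connectedComponentMk v = c := by
      simp only [Finset.mem_filter, Finset.mem_univ, true_and]
      exact hy
    rw [ha] at hymem
    exact Finset.mem_singleton.1 hymem
  · obtain ⟨a, ha⟩ := Finset.card_eq_one.1 (honeK c)
    have hamem : a ∈ (Finset.univ.filter fun v : V => Γ.In v = Set.univ).filter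
        fun v => Γ.underlying.connectedComponentMk v = c := by
      rw [ha]
      exact Finset.mem_singleton_self a
    simp only [Finset.mem_filter, Finset.mem_univ, true_and] at hamem
    refine ⟨a, ⟨hamem.1, hamem.2⟩, ?_⟩
    intro y hy
    have hymem : y ∈ (Finset.univ.filter fun v : V => Γ.In v = Set.univ).filter
        fun v => Γ.underlying.connectedComponentMk v = c := by
      simp only [Finset.mem_filter, Finset.mem_univ, true_and]
      exact hy
    rw [ha] at hymem
    exact Finset.mem_singleton.1 hymem

end WDUniq

end

noncomputable section

open Finsupp

/-- Suppose every entry of the Coxeter matrix is finite, `Γ` is a finite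
`W`-digraph, `Ψ` is a `W`-graph over a subfield `F` of `ℂ`, and `M(Γ)^F ≅ M(Ψ)` as
`H^F`-modules.  Then every connected component of `Γ` contains exactly one source and
exactly one sink. -/
theorem wdigraph_wgraph_unique_source_sink
    {B W V X : Type*} [Group W] {M : CoxeterMatrix B} (cs : CoxeterSystem M W)
    (F : Subfield ℂ)
    -- every dihedral parabolic subgroup of `W` is finite: `n(s,t) < ∞`
    (hfin : ∀ i j : B, M i j ≠ 0)
    -- `H` is the Hecke algebra of `(W, S)` over `F(u)`, with standard basis `T`
    (H : Type*) [Ring H] [Algebra (RatFunc F) H]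
    (T : W → H) (bT : Module.Basis W (RatFunc F) H) (hbT : ∀ w, bT w = T w)
    (hT1 : T 1 = 1)
    (hTmul : ∀ (i : B) (w : W), cs.length w < cs.length (cs.simple i * w) →
      T (cs.simple i) * T w = T (cs.simple i * w))
    (hTsq : ∀ i : B, T (cs.simple i) * T (cs.simple i) =
      (RatFunc.X ^ 2 : RatFunc F) • (1 : H) +
        ((RatFunc.X ^ 2 - 1 : RatFunc F)) • T (cs.simple i))
    -- `Γ` is a finite `W`-digraph, with `H^F`-module `M(Γ)^F` given by `ρ`
    [Finite V] [Finite B] (Γ : WDigraphData B V)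
    (ρ : H →ₐ[RatFunc F] Module.End (RatFunc F) (V →₀ RatFunc F))
    (hρ : ∀ i : B, ρ (T (cs.simple i)) = Γ.tau (RatFunc F) RatFunc.X i)
    -- `Ψ` is a `W`-graph over `F`, with `H^F`-module `M(Ψ)` given by `σ`
    [Fintype X] (Ψ : WGraphData B X F)
    (σ : H →ₐ[RatFunc F] Module.End (RatFunc F) (X →₀ RatFunc F))
    (hσ : ∀ i : B, σ (T (cs.simple i)) = Ψ.tau (RatFunc F) RatFunc.X i)
    -- `M(Γ)^F` is isomorphic to `M(Ψ)` as `H^F`-modules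
    (e : (V →₀ RatFunc F) ≃ₗ[RatFunc F] (X →₀ RatFunc F))
    (he : ∀ (h : H) (m : V →₀ RatFunc F), e (ρ h m) = σ h (e m)) :
    ∀ c : Γ.underlying.ConnectedComponent,
      (∃! v : V, Γ.In v = ∅ ∧ Γ.underlying.connectedComponentMk v = c) ∧
      (∃! v : V, Γ.In v = Set.univ ∧ Γ.underlying.connectedComponentMk v = c) := by
  classical
  haveI : Fintype V := Fintype.ofFinite V
  haveI : Fintype B := Fintype.ofFinite B
  haveI : CharZero ↥F := ⟨fun a b h => by
    have h2 : ((a : ℕ) : ℂ) = ((b : ℕ) : ℂ) := by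
      have h3 := congrArg F.subtype h
      simpa using h3
    exact_mod_cast h2⟩
  have hint : ∀ (i : B) (m : V →₀ RatFunc F),
      e (Γ.tau (RatFunc F) RatFunc.X i m) = Ψ.tau (RatFunc F) RatFunc.X i (e m) := by
    intro i m
    have h := he (T (cs.simple i)) m
    rwa [hρ i, hσ i] at h
  exact WDUniq.master Γ Ψ e hint

end
end
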